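/- Cylinder approximation of the rare-event clusters (paper's Lemma 4.5): fix α ∈ (0,2) and 0 < τ″ < τ′. There exists a sequence (ρ_n) of nonnegative reals with ρ_n → 0 such that for all sufficiently large n, 𝔪(Γ_n^+ ∖ Γ_n^−) ≤ ρ_n · 𝔪(U_n(τ′,τ″)^{(1)}). -/

import Mathlib

open Set MeasureTheory Filter
open scoped ENNReal Topology Classical

/-- The setup of Section 2 of the paper: a full-branched Markov linear map `G` on `[0,1]`
with branch domains `I_1,…,I_{k_I}` (mapped affinely onto `[0,1]`) and complementary
intervals `J_j` (mapped affinely onto `(0,1)`), all of length at most `1/2`. -/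
structure CantorData where
  kI : ℕ
  hkI : 1 ≤ kI
  a : ℕ → ℝ
  ha_lt : ∀ i, i + 1 < 2 * kI → a i < a (i + 1)
  ha0 : 0 ≤ a 0
  ha1 : a (2 * kI - 1) ≤ 1
  G : ℝ → ℝ
  hGmaps : Set.MapsTo G (Set.Icc 0 1) (Set.Icc 0 1)
  hGI : ∀ i < kI, ∃ s c : ℝ,
    |s| * (a (2 * i + 1) - a (2 * i)) = 1 ∧
    (∀ x ∈ Set.Icc (a (2 * i)) (a (2 * i + 1)), G x = s * x + c) ∧
    Set.BijOn G (Set.Icc (a (2 * i)) (a (2 * i + 1))) (Set.Icc 0 1)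
  hGJmid : ∀ i, i + 1 < kI → ∃ s c : ℝ,
    |s| * (a (2 * i + 2) - a (2 * i + 1)) = 1 ∧
    (∀ x ∈ Set.Ioo (a (2 * i + 1)) (a (2 * i + 2)), G x = s * x + c) ∧
    Set.SurjOn G (Set.Ioo (a (2 * i + 1)) (a (2 * i + 2))) (Set.Ioo 0 1)
  hGJleft : 0 < a 0 → ∃ s c : ℝ,
    |s| * a 0 = 1 ∧
    (∀ x ∈ Set.Ico 0 (a 0), G x = s * x + c) ∧
    Set.SurjOn G (Set.Ico 0 (a 0)) (Set.Ioo 0 1)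
  hGJright : a (2 * kI - 1) < 1 → ∃ s c : ℝ,
    |s| * (1 - a (2 * kI - 1)) = 1 ∧
    (∀ x ∈ Set.Ioc (a (2 * kI - 1)) 1, G x = s * x + c) ∧
    Set.SurjOn G (Set.Ioc (a (2 * kI - 1)) 1) (Set.Ioo 0 1)
  hIlen : ∀ i < kI, a (2 * i + 1) - a (2 * i) ≤ 1 / 2
  hJlenL : a 0 ≤ 1 / 2
  hJlenR : 1 - a (2 * kI - 1) ≤ 1 / 2
  hJlenM : ∀ i, i + 1 < kI → a (2 * i + 2) - a (2 * i + 1) ≤ 1 / 2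
  hkJ : (Set.Icc (0:ℝ) 1 \ ⋃ i ∈ Finset.range kI,
      Set.Icc (a (2 * i)) (a (2 * i + 1))).Nonempty

namespace CantorData

variable (S : CantorData)

/-- The union `⋃_i I_i` of the branch domains forming the Cantor construction. -/
def IU : Set ℝ := ⋃ i ∈ Finset.range S.kI, Set.Icc (S.a (2 * i)) (S.a (2 * i + 1))

/-- `Λ_n = {x ∈ [0,1] : G^{i-1}(x) ∈ ⋃ I for all 1 ≤ i ≤ n}`. -/
def Lam (n : ℕ) : Set ℝ := {x ∈ Set.Icc (0:ℝ) 1 | ∀ i < n, S.G^[i] x ∈ S.IU}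

/-- The dynamically defined Cantor set `Λ = ⋂_n Λ_n`. -/
def Cantor : Set ℝ := ⋂ n : ℕ, S.Lam n

/-- `λ = |⋃ I_i| = Σ_i 1/m_i`. -/
noncomputable def lam : ℝ := ∑ i ∈ Finset.range S.kI, (S.a (2 * i + 1) - S.a (2 * i))

/-- `𝔪`, Lebesgue measure on `[0,1]`. -/
noncomputable def mes (_S : CantorData) : Measure ℝ := volume.restrict (Set.Icc 0 1)

/-- `ψ(x) = Σ_{i ∈ 𝓘_x} 2^{-i}` where `𝓘_x = {i ≥ 1 : G^{i-1}(x) ∉ ⋃ I}`. -/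
noncomputable def psi (x : ℝ) : ℝ :=
  ∑' i : ℕ, if S.G^[i] x ∈ S.IU then 0 else (2:ℝ)⁻¹ ^ (i + 1)

/-- `F(t) = 𝔪{x : ψ(x) ≤ t}`, the distribution function of `ψ`. -/
noncomputable def F (t : ℝ) : ℝ := (S.mes {x | S.psi x ≤ t}).toReal

/-- `φ_α = (F ∘ ψ)^{-1/α}`, with value `∞` where `F ∘ ψ` vanishes. -/
noncomputable def phi (α : ℝ) (x : ℝ) : ℝ≥0∞ :=
  ENNReal.ofReal (S.F (S.psi x)) ^ (-(1 / α))

/-- `X_n = φ_α ∘ G^n`. -/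
noncomputable def X (α : ℝ) (n : ℕ) (x : ℝ) : ℝ≥0∞ := S.phi α (S.G^[n] x)

/-- `P_n`: the points following the Cantor construction exactly `n` steps and
never entering `⋃ I` afterwards. -/
def Pset (n : ℕ) : Set ℝ :=
  {x ∈ Set.Icc (0:ℝ) 1 | (∀ i < n, S.G^[i] x ∈ S.IU) ∧ ∀ i, n ≤ i → S.G^[i] x ∉ S.IU}

/-- The family of partition intervals `(I,J)_1,…,(I,J)_{k_I+k_J}`. -/
def PieceFamily : Set (Set ℝ) :=
  ((fun i => Set.Icc (S.a (2 * i)) (S.a (2 * i + 1))) '' Set.Iio S.kI) ∪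
  ((fun i => Set.Ioo (S.a (2 * i + 1)) (S.a (2 * i + 2))) '' {i | i + 1 < S.kI}) ∪
  {Set.Ico (0:ℝ) (S.a 0), Set.Ioc (S.a (2 * S.kI - 1)) 1}

/-- The depth-`d` cylinder `C_w = ⋂_{k=1}^d G^{-(k-1)}((I,J)_{w_k})`. -/
def Cyl (d : ℕ) (w : ℕ → Set ℝ) : Set ℝ := ⋂ k ∈ Finset.range d, (S.G^[k]) ⁻¹' (w k)

/-- `C` is a depth-`d` cylinder. -/
def IsCylinder (d : ℕ) (C : Set ℝ) : Prop :=
  ∃ w : ℕ → Set ℝ, (∀ k < d, w k ∈ S.PieceFamily) ∧ C = S.Cyl d w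

/-- `Υ⁺(A,d)`: union of the depth-`d` cylinders meeting `A`. -/
def upApprox (A : Set ℝ) (d : ℕ) : Set ℝ :=
  ⋃₀ {C | S.IsCylinder d C ∧ (C ∩ A).Nonempty}

/-- `Υ⁻(A,d)`: union of the depth-`d` cylinders contained in `A`. -/
def lowApprox (A : Set ℝ) (d : ℕ) : Set ℝ :=
  ⋃₀ {C | S.IsCylinder d C ∧ C ⊆ A}

/-- `u_n(τ) = (n/τ)^{1/α}`. -/
noncomputable def un (_S : CantorData) (α τ : ℝ) (n : ℕ) : ℝ := ((n : ℝ) / τ) ^ (1 / α)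

/-- `U_n(τ) = {X_0 > u_n(τ)}`. -/
noncomputable def Un (α τ : ℝ) (n : ℕ) : Set ℝ :=
  {x ∈ Set.Icc (0:ℝ) 1 | ENNReal.ofReal (S.un α τ n) < S.X α 0 x}

/-- `U_n^{(1)}(τ) = U_n(τ) ∩ G^{-1}([0,1] ∖ U_n(τ))`. -/
noncomputable def Un1 (α τ : ℝ) (n : ℕ) : Set ℝ :=
  S.Un α τ n ∩ S.G ⁻¹' (Set.Icc 0 1 \ S.Un α τ n)

/-- `U_n(τ',τ'') = U_n(τ') ∖ U_n(τ'')`. -/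
noncomputable def UnPair (α τ' τ'' : ℝ) (n : ℕ) : Set ℝ := S.Un α τ' n \ S.Un α τ'' n

/-- `U_n(τ',τ'')^{(1)}`. -/
noncomputable def UnPair1 (α τ' τ'' : ℝ) (n : ℕ) : Set ℝ :=
  S.UnPair α τ' τ'' n ∩ S.G ⁻¹' (Set.Icc 0 1 \ S.UnPair α τ' τ'' n)

/-- `j_{n,τ}`: the least `j` with `λ^j ≤ τ/n`. -/
noncomputable def jn (τ : ℝ) (n : ℕ) : ℕ := sInf {j : ℕ | S.lam ^ j ≤ τ / n}

/-- `Γ_n^+`: outer approximation of `U_n(τ',τ'')^{(1)}` by depth-`2 j_{n,τ'}` cylinders. -/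
noncomputable def GammaPlus (α τ' τ'' : ℝ) (n : ℕ) : Set ℝ :=
  S.upApprox (S.UnPair1 α τ' τ'' n) (2 * S.jn τ' n)

/-- `Γ_n^-`: inner approximation of `U_n(τ',τ'')^{(1)}` by depth-`2 j_{n,τ'}` cylinders. -/
noncomputable def GammaMinus (α τ' τ'' : ℝ) (n : ℕ) : Set ℝ :=
  S.lowApprox (S.UnPair1 α τ' τ'' n) (2 * S.jn τ' n)

end CantorData
namespace CantorData
variable (S : CantorData)

lemma a_lt_a {i j : ℕ} (hij : i < j) (hj : j < 2 * S.kI) : S.a i < S.a j := by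
  induction j with
  | zero => omega
  | succ j ih =>
    rcases Nat.lt_succ_iff_lt_or_eq.mp hij with h | h
    · exact lt_trans (ih h (by omega)) (S.ha_lt j hj)
    · subst h; exact S.ha_lt i hj

lemma a_le_a {i j : ℕ} (hij : i ≤ j) (hj : j < 2 * S.kI) : S.a i ≤ S.a j := by
  rcases eq_or_lt_of_le hij with h | h
  · exact le_of_eq (congrArg S.a h)
  · exact (S.a_lt_a h hj).le

lemma a_nonneg {i : ℕ} (hi : i < 2 * S.kI) : 0 ≤ S.a i :=
  le_trans S.ha0 (S.a_le_a (Nat.zero_le i) hi)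

lemma a_le_one {i : ℕ} (hi : i < 2 * S.kI) : S.a i ≤ 1 := by
  refine le_trans (S.a_le_a (i := i) (j := 2 * S.kI - 1) (by omega) (by have := S.hkI; omega)) S.ha1

/-- branch interval -/
def Iset (i : ℕ) : Set ℝ := Set.Icc (S.a (2 * i)) (S.a (2 * i + 1))

def Ilen (i : ℕ) : ℝ := S.a (2 * i + 1) - S.a (2 * i)

/-- gap interval, for `j ≤ kI` -/
noncomputable def Jset (j : ℕ) : Set ℝ :=
  if j = 0 then Set.Ico 0 (S.a 0) else if j = S.kI then Set.Ioc (S.a (2 * S.kI - 1)) 1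
  else Set.Ioo (S.a (2 * j - 1)) (S.a (2 * j))

noncomputable def Jlen (j : ℕ) : ℝ :=
  if j = 0 then S.a 0 else if j = S.kI then 1 - S.a (2 * S.kI - 1)
  else S.a (2 * j) - S.a (2 * j - 1)

lemma Ilen_pos {i : ℕ} (hi : i < S.kI) : 0 < S.Ilen i :=
  sub_pos.mpr (S.a_lt_a (by omega) (by omega))

lemma Ilen_le_half {i : ℕ} (hi : i < S.kI) : S.Ilen i ≤ 1 / 2 := S.hIlen i hi

lemma Jlen_nonneg {j : ℕ} (hj : j ≤ S.kI) : 0 ≤ S.Jlen j := by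
  have hk := S.hkI
  unfold Jlen
  split_ifs with h1 h2
  · exact S.ha0
  · have := S.ha1; linarith
  · have : S.a (2 * j - 1) < S.a (2 * j) := S.a_lt_a (by omega) (by omega)
    linarith

lemma Iset_subset_Icc {i : ℕ} (hi : i < S.kI) : S.Iset i ⊆ Set.Icc 0 1 := by
  intro x hx
  obtain ⟨h1, h2⟩ := hx
  constructor
  · exact le_trans (S.a_nonneg (by omega)) h1
  · exact le_trans h2 (S.a_le_one (by omega))

lemma Jset_subset_Icc {j : ℕ} (hj : j ≤ S.kI) : S.Jset j ⊆ Set.Icc 0 1 := by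
  have hk := S.hkI
  intro x hx
  unfold Jset at hx
  split_ifs at hx with h1 h2
  · exact ⟨hx.1, le_trans hx.2.le (S.a_le_one (by omega))⟩
  · exact ⟨le_trans (S.a_nonneg (by omega)) hx.1.le, hx.2⟩
  · constructor
    · exact le_trans (S.a_nonneg (by omega)) hx.1.le
    · exact le_trans hx.2.le (S.a_le_one (by omega))

lemma mem_IU_iff {x : ℝ} : x ∈ S.IU ↔ ∃ i < S.kI, x ∈ S.Iset i := by
  unfold IU Iset
  simp only [Finset.mem_range, Set.mem_iUnion, Set.mem_Icc, exists_prop]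

lemma IU_subset_Icc : S.IU ⊆ Set.Icc 0 1 := by
  intro x hx
  rw [S.mem_IU_iff] at hx
  obtain ⟨i, hi, hx⟩ := hx
  exact S.Iset_subset_Icc hi hx

lemma Jset_disjoint_IU {j : ℕ} (hj : j ≤ S.kI) : S.Jset j ∩ S.IU = ∅ := by
  have hk := S.hkI
  ext x
  simp only [Set.mem_inter_iff, Set.mem_empty_iff_false, iff_false, not_and]
  intro hx hIU
  rw [S.mem_IU_iff] at hIU
  obtain ⟨i, hi, h1, h2⟩ := hIU
  unfold Jset at hx
  split_ifs at hx with e1 e2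
  · have : S.a 0 ≤ S.a (2 * i) := S.a_le_a (Nat.zero_le _) (by omega)
    linarith [hx.2]
  · have : S.a (2 * i + 1) ≤ S.a (2 * S.kI - 1) := S.a_le_a (by omega) (by omega)
    linarith [hx.1]
  · -- x ∈ Ioo (a (2j-1)) (a (2j)), x ∈ [a 2i, a (2i+1)]
    rcases lt_or_ge i j with h | h
    · have : S.a (2 * i + 1) ≤ S.a (2 * j - 1) := S.a_le_a (by omega) (by omega)
      linarith [hx.1]
    · have : S.a (2 * j) ≤ S.a (2 * i) := S.a_le_a (by omega) (by omega)
      linarith [hx.2]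

/-- coverage of `[0,1]` by the pieces -/
lemma coverage {z : ℝ} (hz : z ∈ Set.Icc (0:ℝ) 1) :
    (∃ i < S.kI, z ∈ S.Iset i) ∨ (∃ j ≤ S.kI, z ∈ S.Jset j) := by
  have hk := S.hkI
  rcases lt_or_ge z (S.a 0) with h0 | h0
  · exact Or.inr ⟨0, by omega, by unfold Jset; simp only [if_pos rfl]; exact ⟨hz.1, h0⟩⟩
  rcases lt_or_ge (S.a (2 * S.kI - 1)) z with h1 | h1
  · refine Or.inr ⟨S.kI, le_refl _, ?_⟩
    unfold Jset
    rw [if_neg (by omega), if_pos rfl]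
    exact ⟨h1, hz.2⟩
  -- main induction
  have main : ∀ m, m < 2 * S.kI → z ≤ S.a m →
      (∃ i < S.kI, z ∈ S.Iset i) ∨ (∃ j ≤ S.kI, z ∈ S.Jset j) := by
    intro m
    induction m with
    | zero =>
      intro _ hm
      left
      exact ⟨0, by omega, le_antisymm h0 hm ▸ ⟨le_refl _, (S.a_lt_a (by omega) (by omega)).le⟩⟩
    | succ m ih =>
      intro hm hzm
      rcases le_or_gt z (S.a m) with h | h
      · exact ih (by omega) h
      · rcases Nat.even_or_odd m with ⟨i, hi⟩ | ⟨i, hi⟩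
        · -- m = 2i: a (2i) < z ≤ a (2i+1) : z ∈ Iset i
          left
          exact ⟨i, by omega, by constructor <;> [exact (by rw [← (by omega : 2*i = m)] at h; linarith); (rw [(by omega : 2*i+1 = m+1)]; exact hzm)]⟩
        · -- m = 2i+1: a (2i+1) < z ≤ a (2i+2)
          rcases eq_or_lt_of_le hzm with he | hlt
          · left
            refine ⟨i + 1, by omega, ?_⟩
            constructor
            · rw [(by omega : 2*(i+1) = m+1)]; exact le_of_eq he.symm
            · refine le_trans (le_of_eq he) (S.a_le_a (by omega) (by omega))
          · right
            refine ⟨i + 1, by omega, ?_⟩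
            unfold Jset
            rw [if_neg (by omega), if_neg (by omega)]
            constructor
            · rw [(by omega : 2*(i+1) - 1 = m)]; exact h
            · rw [(by omega : 2*(i+1) = m+1)]; exact hlt
  exact main (2 * S.kI - 1) (by omega) h1

end CantorData
namespace CantorData
variable (S : CantorData)

lemma lam_eq_sum : S.lam = ∑ i ∈ Finset.range S.kI, S.Ilen i := rfl

lemma lam_pos : 0 < S.lam := by
  rw [S.lam_eq_sum]
  apply Finset.sum_pos
  · intro i hi; exact S.Ilen_pos (Finset.mem_range.mp hi)
  · exact ⟨0, Finset.mem_range.mpr S.hkI⟩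

lemma tel : ∀ N, 1 ≤ N → N ≤ S.kI →
    (∑ i ∈ Finset.range N, S.Ilen i) +
      (∑ j ∈ Finset.Ico 1 N, (S.a (2 * j) - S.a (2 * j - 1))) = S.a (2 * N - 1) - S.a 0 := by
  intro N
  induction N with
  | zero => omega
  | succ N ih =>
    intro _ hNk
    rcases Nat.eq_or_lt_of_le (by omega : 1 ≤ N + 1) with h1 | h1
    · simp only [← h1]
      norm_num [Finset.sum_range_one, Ilen]
    · have hN1 : 1 ≤ N := by omega
      rw [Finset.sum_range_succ, Finset.sum_Ico_succ_top hN1]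
      have := ih hN1 (by omega)
      have h2 : 2 * (N + 1) - 1 = 2 * N + 1 := by omega
      have h3 : 2 * N - 1 + 1 = 2 * N := by omega
      rw [h2]
      have hIN : S.Ilen N = S.a (2 * N + 1) - S.a (2 * N) := rfl
      rw [hIN]
      linarith [ih hN1 (by omega)]

lemma lam_add_Jsum : S.lam + ∑ j ∈ Finset.range (S.kI + 1), S.Jlen j = 1 := by
  have hk := S.hkI
  have hsplit : ∑ j ∈ Finset.range (S.kI + 1), S.Jlen j
      = S.Jlen 0 + ((∑ j ∈ Finset.Ico 1 S.kI, S.Jlen j) + S.Jlen S.kI) := by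
    rw [Finset.range_eq_Ico, ← Finset.sum_Ico_succ_top (by omega : 1 ≤ S.kI),
      ← Finset.sum_eq_sum_Ico_succ_bot (by omega : 0 < S.kI + 1)]
  have hmid : ∑ j ∈ Finset.Ico 1 S.kI, S.Jlen j
      = ∑ j ∈ Finset.Ico 1 S.kI, (S.a (2 * j) - S.a (2 * j - 1)) := by
    apply Finset.sum_congr rfl
    intro j hj
    rw [Finset.mem_Ico] at hj
    unfold Jlen
    rw [if_neg (by omega), if_neg (by omega)]
  have h0 : S.Jlen 0 = S.a 0 := by unfold Jlen; rw [if_pos rfl]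
  have hK : S.Jlen S.kI = 1 - S.a (2 * S.kI - 1) := by
    unfold Jlen; rw [if_neg (by omega), if_pos rfl]
  rw [hsplit, hmid, h0, hK, S.lam_eq_sum]
  have := S.tel S.kI (by omega) (le_refl _)
  linarith

lemma Jlen_pos_of_mem {j : ℕ} (hj : j ≤ S.kI) {z : ℝ} (hz : z ∈ S.Jset j) : 0 < S.Jlen j := by
  have hk := S.hkI
  unfold Jset at hz
  unfold Jlen
  split_ifs at hz ⊢ with h1 h2
  · exact lt_of_le_of_lt hz.1 hz.2
  · linarith [hz.1, hz.2]
  · linarith [hz.1, hz.2]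

lemma lam_lt_one : S.lam < 1 := by
  obtain ⟨z, hz, hzIU⟩ := S.hkJ
  have hzIU' : z ∉ S.IU := hzIU
  rcases S.coverage hz with ⟨i, hi, hzi⟩ | ⟨j, hj, hzj⟩
  · exact absurd (S.mem_IU_iff.mpr ⟨i, hi, hzi⟩) hzIU'
  · have h1 : 0 < S.Jlen j := S.Jlen_pos_of_mem hj hzj
    have h2 : S.Jlen j ≤ ∑ j' ∈ Finset.range (S.kI + 1), S.Jlen j' := by
      apply Finset.single_le_sum (fun j' hj' => ?_) (Finset.mem_range.mpr (by omega))
      have hj'' := Finset.mem_range.mp hj'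
      exact S.Jlen_nonneg (by omega)
    linarith [S.lam_add_Jsum]

lemma Jsum_eq : ∑ j ∈ Finset.range (S.kI + 1), S.Jlen j = 1 - S.lam := by
  linarith [S.lam_add_Jsum]

/-- generic affine sub-branch bound -/
lemma sub_branch {P : Set ℝ} {L s c : ℝ} (hs : s ≠ 0) (hlen : |s|⁻¹ ≤ L)
    (hform : ∀ x ∈ P, S.G x = s * x + c) (hP : MeasurableSet P) {B : Set ℝ}
    (hB : MeasurableSet B) :
    volume {z ∈ P | S.G z ∈ B} ≤ ENNReal.ofReal L * volume B ∧
      MeasurableSet {z ∈ P | S.G z ∈ B} := by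
  have hset : {z ∈ P | S.G z ∈ B} = P ∩ (fun x => s * x + c) ⁻¹' B := by
    ext z
    simp only [Set.mem_setOf_eq, Set.mem_inter_iff, Set.mem_preimage]
    constructor
    · rintro ⟨h1, h2⟩; exact ⟨h1, by rw [← hform z h1]; exact h2⟩
    · rintro ⟨h1, h2⟩; exact ⟨h1, by rw [hform z h1]; exact h2⟩
  have hpre : volume ((fun x => s * x + c) ⁻¹' B) = ENNReal.ofReal |s|⁻¹ * volume B := by
    have : (fun x => s * x + c) ⁻¹' B = (s * ·) ⁻¹' ((· + c) ⁻¹' B) := rfl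
    rw [this, Real.volume_preimage_mul_left hs, measure_preimage_add_right, abs_inv]
  constructor
  · rw [hset]
    refine le_trans (measure_mono Set.inter_subset_right) ?_
    rw [hpre]
    exact mul_le_mul_left (ENNReal.ofReal_le_ofReal hlen) _
  · rw [hset]
    exact hP.inter ((measurable_id.const_mul s |>.add_const c) hB)

end CantorData

lemma abs_inv_eq {s L : ℝ} (h : |s| * L = 1) : |s|⁻¹ = L := by
  have hs : |s| ≠ 0 := by intro h0; rw [h0, zero_mul] at h; norm_num at h
  field_simp
  linarith [h]

lemma s_ne_zero {s L : ℝ} (h : |s| * L = 1) : s ≠ 0 := by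
  intro h0; rw [h0] at h; simp at h

namespace CantorData
variable (S : CantorData)

/-- I-branch: exact volume scaling -/
lemma I_branch {i : ℕ} (hi : i < S.kI) {B : Set ℝ} (hB : MeasurableSet B)
    (hB1 : B ⊆ Set.Icc 0 1) :
    volume {z ∈ S.Iset i | S.G z ∈ B} = ENNReal.ofReal (S.Ilen i) * volume B ∧
      MeasurableSet {z ∈ S.Iset i | S.G z ∈ B} := by
  obtain ⟨s, c, hslen, hform, hbij⟩ := S.hGI i hi
  have hs : s ≠ 0 := s_ne_zero hslen
  have hinj : Function.Injective (fun x => s * x + c) := by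
    intro x y hxy
    simp only at hxy
    have : s * x = s * y := by linarith
    exact mul_left_cancel₀ hs this
  have hset : {z ∈ S.Iset i | S.G z ∈ B} = (fun x => s * x + c) ⁻¹' B := by
    ext z
    simp only [Set.mem_setOf_eq, Set.mem_preimage]
    constructor
    · rintro ⟨h1, h2⟩; rw [← hform z h1]; exact h2
    · intro h2
      have himg : (fun x => s * x + c) '' (S.Iset i) = Set.Icc 0 1 := by
        rw [← hbij.image_eq]
        exact (Set.image_congr (fun x hx => (hform x hx).symm))
      have hz : z ∈ S.Iset i := by
        have : (fun x => s * x + c) z ∈ (fun x => s * x + c) '' (S.Iset i) := by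
          rw [himg]; exact hB1 h2
        obtain ⟨w, hw, hwz⟩ := this
        rwa [← hinj hwz]
      exact ⟨hz, by rw [hform z hz]; exact h2⟩
  have hpre : volume ((fun x => s * x + c) ⁻¹' B) = ENNReal.ofReal |s|⁻¹ * volume B := by
    have : (fun x => s * x + c) ⁻¹' B = (s * ·) ⁻¹' ((· + c) ⁻¹' B) := rfl
    rw [this, Real.volume_preimage_mul_left hs, measure_preimage_add_right, abs_inv]
  constructor
  · rw [hset, hpre, abs_inv_eq hslen]; rfl
  · rw [hset]
    exact (measurable_id.const_mul s |>.add_const c) hB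

/-- J-branch: volume bound -/
lemma J_branch {j : ℕ} (hj : j ≤ S.kI) {B : Set ℝ} (hB : MeasurableSet B) :
    volume {z ∈ S.Jset j | S.G z ∈ B} ≤ ENNReal.ofReal (S.Jlen j) * volume B ∧
      MeasurableSet {z ∈ S.Jset j | S.G z ∈ B} := by
  have hk := S.hkI
  have hempty : ∀ (h : S.Jset j = ∅), _ := fun h => h
  by_cases hj0 : j = 0
  · subst hj0
    unfold Jset Jlen
    rw [if_pos rfl, if_pos rfl]
    rcases eq_or_lt_of_le S.ha0 with h0 | h0
    · have : Set.Ico (0:ℝ) (S.a 0) = ∅ := by rw [← h0]; exact Set.Ico_self 0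
      rw [this]
      simp only [Set.mem_empty_iff_false, false_and, Set.setOf_false]
      exact ⟨by simp, MeasurableSet.empty⟩
    · obtain ⟨s, c, hslen, hform, _⟩ := S.hGJleft h0
      exact S.sub_branch (s_ne_zero hslen) (le_of_eq (abs_inv_eq hslen)) hform
        measurableSet_Ico hB
  · by_cases hjK : j = S.kI
    · subst hjK
      unfold Jset Jlen
      rw [if_neg hj0, if_pos rfl, if_neg hj0, if_pos rfl]
      rcases eq_or_lt_of_le S.ha1 with h0 | h0
      · have : Set.Ioc (S.a (2 * S.kI - 1)) (1:ℝ) = ∅ := by rw [h0]; exact Set.Ioc_self 1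
        rw [this]
        simp only [Set.mem_empty_iff_false, false_and, Set.setOf_false]
        exact ⟨by simp, MeasurableSet.empty⟩
      · obtain ⟨s, c, hslen, hform, _⟩ := S.hGJright h0
        exact S.sub_branch (s_ne_zero hslen) (le_of_eq (abs_inv_eq hslen)) hform
          measurableSet_Ioc hB
    · have hj1 : 1 ≤ j := by omega
      have hjk : j < S.kI := by omega
      obtain ⟨s, c, hslen, hform, _⟩ := S.hGJmid (j - 1) (by omega)
      have e1 : 2 * (j - 1) + 1 = 2 * j - 1 := by omega
      have e2 : 2 * (j - 1) + 2 = 2 * j := by omega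
      rw [e1, e2] at hslen hform
      unfold Jset Jlen
      rw [if_neg hj0, if_neg hjK, if_neg hj0, if_neg hjK]
      exact S.sub_branch (s_ne_zero hslen) (le_of_eq (abs_inv_eq hslen)) hform
        measurableSet_Ioo hB

end CantorData
namespace CantorData
variable (S : CantorData)

/-- the `i`-th term of `ψ` -/
noncomputable def trm (z : ℝ) (i : ℕ) : ℝ := if S.G^[i] z ∈ S.IU then 0 else (2:ℝ)⁻¹ ^ (i + 1)

lemma psi_eq_tsum (z : ℝ) : S.psi z = ∑' i, S.trm z i := rfl

lemma trm_nonneg (z : ℝ) (i : ℕ) : 0 ≤ S.trm z i := by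
  unfold trm; split_ifs
  · exact le_rfl
  · positivity

lemma trm_le (z : ℝ) (i : ℕ) : S.trm z i ≤ (2:ℝ)⁻¹ ^ (i + 1) := by
  unfold trm; split_ifs
  · positivity
  · exact le_rfl

lemma summable_pow : Summable (fun i : ℕ => (2:ℝ)⁻¹ ^ (i + 1)) := by
  have h : ∀ i : ℕ, (2:ℝ)⁻¹ ^ (i + 1) = (2:ℝ)⁻¹ ^ i * 2⁻¹ := fun i => pow_succ _ _
  rw [funext h]
  exact (summable_geometric_of_lt_one (by norm_num) (by norm_num : (2:ℝ)⁻¹ < 1)).mul_right _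

lemma summable_trm (z : ℝ) : Summable (S.trm z) :=
  Summable.of_nonneg_of_le (S.trm_nonneg z) (S.trm_le z) summable_pow

lemma tsum_pow_eq_one (S : CantorData) : ∑' i : ℕ, (2:ℝ)⁻¹ ^ (i + 1) = 1 := by
  have h : ∀ i : ℕ, (2:ℝ)⁻¹ ^ (i + 1) = (2:ℝ)⁻¹ ^ i * 2⁻¹ := fun i => pow_succ _ _
  rw [funext h, tsum_mul_right, tsum_geometric_of_lt_one (by norm_num) (by norm_num)]
  norm_num

lemma geo_fin (d : ℕ) : ∑ i ∈ Finset.range d, (2:ℝ)⁻¹ ^ (i + 1) = 1 - 2⁻¹ ^ d := by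
  induction d with
  | zero => simp
  | succ d ih => rw [Finset.sum_range_succ, ih]; ring

lemma psi_nonneg (z : ℝ) : 0 ≤ S.psi z := tsum_nonneg (S.trm_nonneg z)

lemma psi_le_one (z : ℝ) : S.psi z ≤ 1 := by
  rw [psi_eq_tsum, ← tsum_pow_eq_one S]
  exact Summable.tsum_le_tsum (S.trm_le z) (S.summable_trm z) summable_pow

/-- partial dyadic sum -/
noncomputable def Sd (z : ℝ) (d : ℕ) : ℝ := ∑ i ∈ Finset.range d, S.trm z i

lemma psi_split (z : ℝ) (d : ℕ) : S.psi z = S.Sd z d + ∑' i, S.trm z (i + d) := by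
  rw [psi_eq_tsum, ← Summable.sum_add_tsum_nat_add d (S.summable_trm z)]; rfl

lemma tail_nonneg (z : ℝ) (d : ℕ) : 0 ≤ ∑' i, S.trm z (i + d) :=
  tsum_nonneg (fun i => S.trm_nonneg z _)

lemma tail_le (z : ℝ) (d : ℕ) : ∑' i, S.trm z (i + d) ≤ (2:ℝ)⁻¹ ^ d := by
  have h1 : ∑' i : ℕ, (2:ℝ)⁻¹ ^ (i + d + 1) = (2:ℝ)⁻¹ ^ d := by
    have h : ∀ i : ℕ, (2:ℝ)⁻¹ ^ (i + d + 1) = (2:ℝ)⁻¹ ^ (i + 1) * 2⁻¹ ^ d := by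
      intro i; rw [← pow_add]; ring_nf
    rw [funext h, tsum_mul_right, tsum_pow_eq_one S, one_mul]
  rw [← h1]
  exact Summable.tsum_le_tsum (fun i => S.trm_le z _) ((S.summable_trm z).comp_injective
    (add_left_injective d)) (by exact summable_pow.comp_injective (add_left_injective d))

lemma Sd_nonneg (z : ℝ) (d : ℕ) : 0 ≤ S.Sd z d :=
  Finset.sum_nonneg (fun i _ => S.trm_nonneg z i)

lemma Sd_le_psi (z : ℝ) (d : ℕ) : S.Sd z d ≤ S.psi z := by
  rw [S.psi_split z d]; linarith [S.tail_nonneg z d]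

lemma psi_le_Sd (z : ℝ) (d : ℕ) : S.psi z ≤ S.Sd z d + (2:ℝ)⁻¹ ^ d := by
  rw [S.psi_split z d]; linarith [S.tail_le z d]

lemma psi_lb {z : ℝ} {i : ℕ} (h : S.G^[i] z ∉ S.IU) : (2:ℝ)⁻¹ ^ (i + 1) ≤ S.psi z := by
  have := Summable.le_tsum (S.summable_trm z) i (fun j _ => S.trm_nonneg z j)
  rwa [show S.trm z i = (2:ℝ)⁻¹ ^ (i + 1) from if_neg h] at this

lemma psi_prefix {z : ℝ} {m : ℕ} (h : ∀ i < m, S.G^[i] z ∈ S.IU) : S.psi z ≤ (2:ℝ)⁻¹ ^ m := by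
  have hS : S.Sd z m = 0 :=
    Finset.sum_eq_zero (fun i hi => if_pos (h i (Finset.mem_range.mp hi)))
  have := S.psi_le_Sd z m
  rw [hS, zero_add] at this
  exact this

lemma psi_shift {z : ℝ} (h : z ∈ S.IU) : S.psi z = 2⁻¹ * S.psi (S.G z) := by
  rw [psi_eq_tsum, Summable.tsum_eq_zero_add (S.summable_trm z)]
  have h0 : S.trm z 0 = 0 := if_pos h
  have hsucc : ∀ i : ℕ, S.trm z (i + 1) = 2⁻¹ * S.trm (S.G z) i := by
    intro i
    unfold trm
    rw [Function.iterate_succ_apply]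
    split_ifs
    · ring
    · rw [pow_succ]; ring
  rw [h0, funext hsucc, tsum_mul_left, zero_add, psi_eq_tsum]

lemma psi_shift_out {z : ℝ} (h : z ∉ S.IU) : S.psi z = 2⁻¹ + 2⁻¹ * S.psi (S.G z) := by
  rw [psi_eq_tsum, Summable.tsum_eq_zero_add (S.summable_trm z)]
  have h0 : S.trm z 0 = 2⁻¹ := by
    unfold trm; rw [if_neg (by simpa using h)]; norm_num
  have hsucc : ∀ i : ℕ, S.trm z (i + 1) = 2⁻¹ * S.trm (S.G z) i := by
    intro i
    unfold trm
    rw [Function.iterate_succ_apply]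
    split_ifs
    · ring
    · rw [pow_succ]; ring
  rw [h0, funext hsucc, tsum_mul_left, psi_eq_tsum]

lemma Sd_congr {z z' : ℝ} {d : ℕ}
    (h : ∀ i < d, (S.G^[i] z ∈ S.IU ↔ S.G^[i] z' ∈ S.IU)) : S.Sd z d = S.Sd z' d := by
  apply Finset.sum_congr rfl
  intro i hi
  have := h i (Finset.mem_range.mp hi)
  unfold trm
  by_cases hz : S.G^[i] z ∈ S.IU
  · rw [if_pos hz, if_pos (this.mp hz)]
  · rw [if_neg hz, if_neg (fun hh => hz (this.mpr hh))]

lemma psi_close {z z' : ℝ} {d : ℕ}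
    (h : ∀ i < d, (S.G^[i] z ∈ S.IU ↔ S.G^[i] z' ∈ S.IU)) :
    |S.psi z - S.psi z'| ≤ (2:ℝ)⁻¹ ^ d := by
  have h1 := S.Sd_le_psi z d
  have h2 := S.psi_le_Sd z d
  have h3 := S.Sd_le_psi z' d
  have h4 := S.psi_le_Sd z' d
  have h5 := S.Sd_congr h
  rw [abs_le]
  constructor <;> linarith

/-- pattern set -/
def PSet (d : ℕ) (p : ℕ → Bool) : Set ℝ :=
  {z ∈ Set.Icc (0:ℝ) 1 | ∀ i < d, (S.G^[i] z ∈ S.IU ↔ p i = true)}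

lemma IU_meas : MeasurableSet S.IU :=
  Finset.measurableSet_biUnion _ (fun _ _ => measurableSet_Icc)

lemma Iset_disjoint {i i' : ℕ} (hi : i < S.kI) (hi' : i' < S.kI) (hne : i ≠ i') :
    S.Iset i ∩ S.Iset i' = ∅ := by
  ext z
  simp only [Set.mem_inter_iff, Set.mem_empty_iff_false, iff_false, not_and]
  intro h1 h2
  rcases Nat.lt_or_ge i i' with h | h
  · have : S.a (2 * i + 1) < S.a (2 * i') := S.a_lt_a (by omega) (by omega)
    linarith [h1.2, h2.1]
  · have : S.a (2 * i' + 1) < S.a (2 * i) := S.a_lt_a (by omega) (by omega)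
    linarith [h1.1, h2.2]

lemma wfactor_def : True := trivial

/-- master induction: measurability and measure bound of pattern sets -/
lemma PSet_master : ∀ (d : ℕ) (p : ℕ → Bool), MeasurableSet (S.PSet d p) ∧
    volume (S.PSet d p) ≤ ∏ i ∈ Finset.range d,
      ENNReal.ofReal (if p i then S.lam else 1 - S.lam) := by
  intro d
  induction d with
  | zero =>
    intro p
    constructor
    · have : S.PSet 0 p = Set.Icc 0 1 := by
        ext z; simp [PSet]
      rw [this]; exact measurableSet_Icc
    · have : S.PSet 0 p ⊆ Set.Icc 0 1 := fun z hz => hz.1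
      calc volume (S.PSet 0 p) ≤ volume (Set.Icc (0:ℝ) 1) := measure_mono this
      _ = 1 := by rw [Real.volume_Icc]; norm_num
      _ = _ := by simp
  | succ d ih =>
    intro p
    have hsub : MeasurableSet (S.PSet d (fun i => p (i + 1))) ∧
        volume (S.PSet d (fun i => p (i + 1))) ≤ ∏ i ∈ Finset.range d,
          ENNReal.ofReal (if p (i + 1) then S.lam else 1 - S.lam) := ih _
    have hPsub : S.PSet d (fun i => p (i + 1)) ⊆ Set.Icc 0 1 := fun z hz => hz.1
    by_cases hp0 : p 0 = true
    · -- decompose over I pieces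
      have hdec : S.PSet (d + 1) p =
          ⋃ i ∈ Finset.range S.kI, {z ∈ S.Iset i | S.G z ∈ S.PSet d (fun i => p (i + 1))} := by
        ext z
        simp only [Set.mem_iUnion, Finset.mem_range, Set.mem_setOf_eq, exists_prop]
        constructor
        · rintro ⟨hz, hpat⟩
          have h0 : z ∈ S.IU := (hpat 0 (by omega)).mpr hp0
          obtain ⟨i, hi, hzi⟩ := S.mem_IU_iff.mp h0
          refine ⟨i, hi, hzi, S.hGmaps hz, ?_⟩
          intro k hk
          rw [← Function.iterate_succ_apply]
          exact hpat (k + 1) (by omega)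
        · rintro ⟨i, hi, hzi, hG⟩
          have hz : z ∈ Set.Icc (0:ℝ) 1 := S.Iset_subset_Icc hi hzi
          refine ⟨hz, ?_⟩
          intro k hk
          rcases Nat.eq_zero_or_pos k with rfl | hkpos
          · simpa [hp0] using S.mem_IU_iff.mpr ⟨i, hi, hzi⟩
          · obtain ⟨k', hkeq⟩ := Nat.exists_eq_succ_of_ne_zero (Nat.pos_iff_ne_zero.mp hkpos)
            subst hkeq
            rw [Function.iterate_succ_apply]
            exact hG.2 k' (by omega)
      constructor
      · rw [hdec]
        exact Finset.measurableSet_biUnion _ (fun i hi =>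
          (S.I_branch (Finset.mem_range.mp hi) hsub.1 hPsub).2)
      · rw [hdec, Finset.prod_range_succ']
        calc volume _ ≤ ∑ i ∈ Finset.range S.kI,
            volume {z ∈ S.Iset i | S.G z ∈ S.PSet d (fun i => p (i + 1))} :=
              measure_biUnion_finset_le _ _
        _ = ∑ i ∈ Finset.range S.kI, ENNReal.ofReal (S.Ilen i) *
              volume (S.PSet d (fun i => p (i + 1))) := by
            apply Finset.sum_congr rfl
            intro i hi
            exact (S.I_branch (Finset.mem_range.mp hi) hsub.1 hPsub).1
        _ = ENNReal.ofReal S.lam * volume (S.PSet d (fun i => p (i + 1))) := by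
            rw [← Finset.sum_mul, ← ENNReal.ofReal_sum_of_nonneg
              (fun i hi => (S.Ilen_pos (Finset.mem_range.mp hi)).le), ← S.lam_eq_sum]
        _ ≤ _ := by
            rw [if_pos hp0, mul_comm]
            exact mul_le_mul' hsub.2 (le_refl _)
    · -- decompose over J pieces
      have hdec : S.PSet (d + 1) p ⊆
          ⋃ j ∈ Finset.range (S.kI + 1), {z ∈ S.Jset j | S.G z ∈ S.PSet d (fun i => p (i + 1))} := by
        intro z hz
        obtain ⟨hzI, hpat⟩ := hz
        have h0 : z ∉ S.IU := fun h => hp0 ((hpat 0 (by omega)).mp h)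
        rcases S.coverage hzI with ⟨i, hi, hzi⟩ | ⟨j, hj, hzj⟩
        · exact absurd (S.mem_IU_iff.mpr ⟨i, hi, hzi⟩) h0
        · simp only [Set.mem_iUnion, Finset.mem_range, Set.mem_setOf_eq, exists_prop]
          refine ⟨j, by omega, hzj, S.hGmaps hzI, ?_⟩
          intro k hk
          rw [← Function.iterate_succ_apply]
          exact hpat (k + 1) (by omega)
      constructor
      · -- measurability: same decomposition is an equality
        have hdec2 : S.PSet (d + 1) p =
            ⋃ j ∈ Finset.range (S.kI + 1), {z ∈ S.Jset j | S.G z ∈ S.PSet d (fun i => p (i + 1))} := by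
          apply Set.Subset.antisymm hdec
          intro z hz
          simp only [Set.mem_iUnion, Finset.mem_range, Set.mem_setOf_eq, exists_prop] at hz
          obtain ⟨j, hj, hzj, hG⟩ := hz
          have hz1 : z ∈ Set.Icc (0:ℝ) 1 := S.Jset_subset_Icc (by omega) hzj
          refine ⟨hz1, ?_⟩
          intro k hk
          rcases Nat.eq_zero_or_pos k with rfl | hkpos
          · simp only [Function.iterate_zero, id_eq]
            have : z ∉ S.IU := by
              intro hIU
              have := S.Jset_disjoint_IU (j := j) (by omega)
              exact absurd (Set.mem_inter hzj hIU) (by rw [this]; exact Set.notMem_empty z)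
            simp [this, hp0]
          · obtain ⟨k', hkeq⟩ := Nat.exists_eq_succ_of_ne_zero (Nat.pos_iff_ne_zero.mp hkpos)
            subst hkeq
            rw [Function.iterate_succ_apply]
            exact hG.2 k' (by omega)
        rw [hdec2]
        exact Finset.measurableSet_biUnion _ (fun j hj =>
          (S.J_branch (by have := Finset.mem_range.mp hj; omega) hsub.1).2)
      · rw [Finset.prod_range_succ']
        calc volume (S.PSet (d+1) p) ≤ volume (⋃ j ∈ Finset.range (S.kI + 1),
              {z ∈ S.Jset j | S.G z ∈ S.PSet d (fun i => p (i + 1))}) := measure_mono hdec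
        _ ≤ ∑ j ∈ Finset.range (S.kI + 1),
            volume {z ∈ S.Jset j | S.G z ∈ S.PSet d (fun i => p (i + 1))} :=
              measure_biUnion_finset_le _ _
        _ ≤ ∑ j ∈ Finset.range (S.kI + 1), ENNReal.ofReal (S.Jlen j) *
              volume (S.PSet d (fun i => p (i + 1))) := by
            apply Finset.sum_le_sum
            intro j hj
            exact (S.J_branch (by have := Finset.mem_range.mp hj; omega) hsub.1).1
        _ = ENNReal.ofReal (1 - S.lam) * volume (S.PSet d (fun i => p (i + 1))) := by
            rw [← Finset.sum_mul, ← ENNReal.ofReal_sum_of_nonneg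
              (fun j hj => S.Jlen_nonneg (by have := Finset.mem_range.mp hj; omega)), S.Jsum_eq]
        _ ≤ _ := by
            rw [if_neg hp0, mul_comm]
            exact mul_le_mul' hsub.2 (le_refl _)

end CantorData
namespace CantorData
variable (S : CantorData)

lemma step_decomp (C : Set ℝ) :
    {z ∈ Set.Icc (0:ℝ) 1 | S.G z ∈ C} =
      (⋃ i ∈ Finset.range S.kI, {z ∈ S.Iset i | S.G z ∈ C}) ∪
      (⋃ j ∈ Finset.range (S.kI + 1), {z ∈ S.Jset j | S.G z ∈ C}) := by
  ext z
  simp only [Set.mem_setOf_eq, Set.mem_union, Set.mem_iUnion, Finset.mem_range, exists_prop]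
  constructor
  · rintro ⟨hz, hG⟩
    rcases S.coverage hz with ⟨i, hi, hzi⟩ | ⟨j, hj, hzj⟩
    · exact Or.inl ⟨i, hi, hzi, hG⟩
    · exact Or.inr ⟨j, by omega, hzj, hG⟩
  · rintro (⟨i, hi, hzi, hG⟩ | ⟨j, hj, hzj, hG⟩)
    · exact ⟨S.Iset_subset_Icc hi hzi, hG⟩
    · exact ⟨S.Jset_subset_Icc (by omega) hzj, hG⟩

lemma Mlem : ∀ (d : ℕ) {B : Set ℝ}, MeasurableSet B → B ⊆ Set.Icc 0 1 →
    MeasurableSet {z ∈ Set.Icc (0:ℝ) 1 | S.G^[d] z ∈ B} := by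
  intro d
  induction d with
  | zero =>
    intro B hB hB1
    have : {z ∈ Set.Icc (0:ℝ) 1 | S.G^[0] z ∈ B} = B := by
      ext z
      simp only [Function.iterate_zero, id_eq, Set.mem_setOf_eq]
      exact ⟨fun h => h.2, fun h => ⟨hB1 h, h⟩⟩
    rw [this]; exact hB
  | succ d ih =>
    intro B hB hB1
    have hC : MeasurableSet {y ∈ Set.Icc (0:ℝ) 1 | S.G^[d] y ∈ B} := ih hB hB1
    have hC1 : {y ∈ Set.Icc (0:ℝ) 1 | S.G^[d] y ∈ B} ⊆ Set.Icc 0 1 := fun y hy => hy.1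
    have heq : {z ∈ Set.Icc (0:ℝ) 1 | S.G^[d + 1] z ∈ B} =
        {z ∈ Set.Icc (0:ℝ) 1 | S.G z ∈ {y ∈ Set.Icc (0:ℝ) 1 | S.G^[d] y ∈ B}} := by
      ext z
      simp only [Set.mem_setOf_eq, Function.iterate_succ_apply]
      constructor
      · rintro ⟨hz, hG⟩; exact ⟨hz, S.hGmaps hz, hG⟩
      · rintro ⟨hz, _, hG⟩; exact ⟨hz, hG⟩
    rw [heq, S.step_decomp]
    exact MeasurableSet.union
      (Finset.measurableSet_biUnion _ (fun i hi =>
        (S.I_branch (Finset.mem_range.mp hi) hC hC1).2))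
      (Finset.measurableSet_biUnion _ (fun j hj =>
        (S.J_branch (by have := Finset.mem_range.mp hj; omega) hC).2))

lemma meas_pat (i : ℕ) : MeasurableSet {z ∈ Set.Icc (0:ℝ) 1 | S.G^[i] z ∈ S.IU} :=
  S.Mlem i S.IU_meas S.IU_subset_Icc

/-- ENNReal-valued measurable version of ψ -/
noncomputable def psie : ℝ → ℝ≥0∞ := fun z =>
  ∑' i, Set.indicator {z ∈ Set.Icc (0:ℝ) 1 | S.G^[i] z ∉ S.IU}
    (fun _ => ENNReal.ofReal ((2:ℝ)⁻¹ ^ (i + 1))) z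

lemma psie_meas : Measurable S.psie := by
  apply Measurable.ennreal_tsum
  intro i
  apply Measurable.indicator measurable_const
  have : {z ∈ Set.Icc (0:ℝ) 1 | S.G^[i] z ∉ S.IU} =
      Set.Icc (0:ℝ) 1 \ {z ∈ Set.Icc (0:ℝ) 1 | S.G^[i] z ∈ S.IU} := by
    ext z
    simp only [Set.mem_setOf_eq, Set.mem_diff]
    tauto
  rw [this]
  exact measurableSet_Icc.diff (S.meas_pat i)

lemma psie_eq {z : ℝ} (hz : z ∈ Set.Icc (0:ℝ) 1) : S.psie z = ENNReal.ofReal (S.psi z) := by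
  rw [psi_eq_tsum, ENNReal.ofReal_tsum_of_nonneg (S.trm_nonneg z) (S.summable_trm z)]
  unfold psie
  congr 1
  ext i
  by_cases hp : S.G^[i] z ∈ S.IU
  · rw [Set.indicator_of_notMem (fun h => h.2 hp)]
    rw [show S.trm z i = 0 from if_pos hp]
    simp
  · rw [Set.indicator_of_mem (show z ∈ {z ∈ Set.Icc (0:ℝ) 1 | S.G^[i] z ∉ S.IU} from ⟨hz, hp⟩),
      show S.trm z i = (2:ℝ)⁻¹ ^ (i + 1) from if_neg hp]

lemma meas_psi_le (t : ℝ) : MeasurableSet {z ∈ Set.Icc (0:ℝ) 1 | S.psi z ≤ t} := by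
  rcases lt_or_ge t 0 with ht | ht
  · have : {z ∈ Set.Icc (0:ℝ) 1 | S.psi z ≤ t} = ∅ := by
      ext z
      simp only [Set.mem_setOf_eq, Set.mem_empty_iff_false, iff_false, not_and, not_le]
      intro _
      exact lt_of_lt_of_le ht (S.psi_nonneg z)
    rw [this]; exact MeasurableSet.empty
  · have : {z ∈ Set.Icc (0:ℝ) 1 | S.psi z ≤ t} =
        Set.Icc (0:ℝ) 1 ∩ S.psie ⁻¹' (Set.Iic (ENNReal.ofReal t)) := by
      ext z
      simp only [Set.mem_setOf_eq, Set.mem_inter_iff, Set.mem_preimage, Set.mem_Iic]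
      constructor
      · rintro ⟨hz, hle⟩
        exact ⟨hz, by rw [S.psie_eq hz]; exact ENNReal.ofReal_le_ofReal hle⟩
      · rintro ⟨hz, hle⟩
        rw [S.psie_eq hz] at hle
        exact ⟨hz, (ENNReal.ofReal_le_ofReal_iff ht).mp hle⟩
    rw [this]
    exact measurableSet_Icc.inter (S.psie_meas measurableSet_Iic)

/-- the sets `Λ_d` (up to def) -/
def LamSet (d : ℕ) : Set ℝ := {z ∈ Set.Icc (0:ℝ) 1 | ∀ i < d, S.G^[i] z ∈ S.IU}

lemma LamSet_eq_PSet (d : ℕ) : S.LamSet d = S.PSet d (fun _ => true) := by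
  ext z
  simp [LamSet, PSet]

lemma LamSet_meas (d : ℕ) : MeasurableSet (S.LamSet d) := by
  rw [S.LamSet_eq_PSet]; exact (S.PSet_master d _).1

lemma LamSet_subset (d : ℕ) : S.LamSet d ⊆ Set.Icc 0 1 := fun z hz => hz.1

lemma LamSet_vol : ∀ d : ℕ, volume (S.LamSet d) = ENNReal.ofReal S.lam ^ d := by
  intro d
  induction d with
  | zero =>
    have : S.LamSet 0 = Set.Icc 0 1 := by ext z; simp [LamSet]
    rw [this, Real.volume_Icc]
    norm_num
  | succ d ih =>
    have hdec : S.LamSet (d + 1) =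
        ⋃ i ∈ Finset.range S.kI, {z ∈ S.Iset i | S.G z ∈ S.LamSet d} := by
      ext z
      simp only [LamSet, Set.mem_setOf_eq, Set.mem_iUnion, Finset.mem_range, exists_prop]
      constructor
      · rintro ⟨hz, hpat⟩
        obtain ⟨i, hi, hzi⟩ := S.mem_IU_iff.mp (by simpa using hpat 0 (by omega))
        refine ⟨i, hi, hzi, S.hGmaps hz, fun k hk => ?_⟩
        rw [← Function.iterate_succ_apply]
        exact hpat (k + 1) (by omega)
      · rintro ⟨i, hi, hzi, hGIcc, hG⟩
        refine ⟨S.Iset_subset_Icc hi hzi, fun k hk => ?_⟩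
        rcases Nat.eq_zero_or_pos k with rfl | hkpos
        · simpa using S.mem_IU_iff.mpr ⟨i, hi, hzi⟩
        · obtain ⟨k', hkeq⟩ := Nat.exists_eq_succ_of_ne_zero (Nat.pos_iff_ne_zero.mp hkpos)
          subst hkeq
          rw [Function.iterate_succ_apply]
          exact hG k' (by omega)
    rw [hdec, measure_biUnion_finset]
    · have : ∀ i ∈ Finset.range S.kI,
          volume {z ∈ S.Iset i | S.G z ∈ S.LamSet d} = ENNReal.ofReal (S.Ilen i) *
            ENNReal.ofReal S.lam ^ d := by
        intro i hi
        rw [(S.I_branch (Finset.mem_range.mp hi) (S.LamSet_meas d) (S.LamSet_subset d)).1, ih]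
      rw [Finset.sum_congr rfl this, ← Finset.sum_mul, ← ENNReal.ofReal_sum_of_nonneg
        (fun i hi => (S.Ilen_pos (Finset.mem_range.mp hi)).le), ← S.lam_eq_sum, pow_succ]
      ring
    · intro i hi i' hi' hne
      simp only [Function.onFun]
      rw [Set.disjoint_iff_inter_eq_empty]
      have hsub : {z ∈ S.Iset i | S.G z ∈ S.LamSet d} ∩ {z ∈ S.Iset i' | S.G z ∈ S.LamSet d}
          ⊆ S.Iset i ∩ S.Iset i' := fun z hz => ⟨hz.1.1, hz.2.1⟩
      rw [← Set.subset_empty_iff]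
      rw [← S.Iset_disjoint (Finset.mem_range.mp hi) (Finset.mem_range.mp hi') hne]
      exact hsub
    · intro i hi
      exact (S.I_branch (Finset.mem_range.mp hi) (S.LamSet_meas d) (S.LamSet_subset d)).2

end CantorData
/-- dyadic value of a boolean pattern -/
noncomputable def vB (d : ℕ) (p : ℕ → Bool) : ℝ :=
  ∑ i ∈ Finset.range d, (if p i then 0 else (2:ℝ)⁻¹ ^ (i + 1))

lemma vB_nonneg (d : ℕ) (p : ℕ → Bool) : 0 ≤ vB d p :=
  Finset.sum_nonneg (fun i _ => by split_ifs <;> positivity)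

lemma vB_le (d : ℕ) (p : ℕ → Bool) : vB d p ≤ 1 - (2:ℝ)⁻¹ ^ d := by
  calc vB d p ≤ ∑ i ∈ Finset.range d, (2:ℝ)⁻¹ ^ (i + 1) := by
        apply Finset.sum_le_sum
        intro i _
        split_ifs <;> [positivity; exact le_rfl]
  _ = 1 - (2:ℝ)⁻¹ ^ d := by
        induction d with
        | zero => simp
        | succ d ih => rw [Finset.sum_range_succ, ih]; ring

lemma vB_succ (d : ℕ) (p : ℕ → Bool) :
    vB (d + 1) p = (if p 0 then 0 else 2⁻¹) + 2⁻¹ * vB d (fun i => p (i + 1)) := by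
  unfold vB
  rw [Finset.sum_range_succ', Finset.mul_sum]
  have h : ∀ i, (if p (i + 1) then (0:ℝ) else (2:ℝ)⁻¹ ^ (i + 1 + 1)) =
      2⁻¹ * (if p (i + 1) then 0 else (2:ℝ)⁻¹ ^ (i + 1)) := by
    intro i
    split_ifs
    · ring
    · rw [pow_succ]; ring
  rw [Finset.sum_congr rfl (fun i _ => h i)]
  rw [add_comm]
  norm_num

lemma vB_inj : ∀ (d : ℕ) (p q : ℕ → Bool), vB d p = vB d q → ∀ i < d, p i = q i := by
  intro d
  induction d with
  | zero => intro p q _ i hi; omega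
  | succ d ih =>
    intro p q heq i hi
    rw [vB_succ, vB_succ] at heq
    have hp' := vB_le d (fun i => p (i + 1))
    have hq' := vB_le d (fun i => q (i + 1))
    have hp'' := vB_nonneg d (fun i => p (i + 1))
    have hq'' := vB_nonneg d (fun i => q (i + 1))
    have hd : (0:ℝ) < (2:ℝ)⁻¹ ^ d := by positivity
    have h00 : p 0 = q 0 := by
      by_contra hne
      rcases Bool.eq_false_or_eq_true (p 0) with h1 | h1 <;>
        rcases Bool.eq_false_or_eq_true (q 0) with h2 | h2 <;>
          simp [h1, h2] at heq hne ⊢ <;> nlinarith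
    rw [h00] at heq
    have htail : vB d (fun i => p (i + 1)) = vB d (fun i => q (i + 1)) := by
      have h2 : (2:ℝ)⁻¹ * vB d (fun i => p (i + 1)) = 2⁻¹ * vB d (fun i => q (i + 1)) := by
        split_ifs at heq <;> linarith
      linarith
    rcases Nat.eq_zero_or_pos i with rfl | hipos
    · exact h00
    · obtain ⟨i', hieq⟩ := Nat.exists_eq_succ_of_ne_zero (Nat.pos_iff_ne_zero.mp hipos)
      subst hieq
      exact ih _ _ htail i' (by omega)

/-- integer value of a boolean pattern -/
def nvB (d : ℕ) (p : ℕ → Bool) : ℕ :=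
  ∑ i ∈ Finset.range d, (if p i then 0 else 2 ^ (d - (i + 1)))

lemma nvB_cast (d : ℕ) (p : ℕ → Bool) : (nvB d p : ℝ) = vB d p * 2 ^ d := by
  unfold nvB vB
  rw [Finset.sum_mul]
  push_cast
  apply Finset.sum_congr rfl
  intro i hi
  have hid : i + 1 ≤ d := Finset.mem_range.mp hi
  split_ifs
  · simp
  · rw [pow_sub₀ (2:ℝ) (by norm_num) hid, inv_pow]
    field_simp

/-- extension of a finite pattern -/
def extp (d : ℕ) (p : Fin d → Bool) : ℕ → Bool := fun i => if h : i < d then p ⟨i, h⟩ else true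

lemma extp_lt {d : ℕ} (p : Fin d → Bool) {i : ℕ} (hi : i < d) : extp d p i = p ⟨i, hi⟩ :=
  dif_pos hi

namespace CantorData
variable (S : CantorData)

/-- pattern of a point -/
noncomputable def patB (z : ℝ) : ℕ → Bool := fun i => decide (S.G^[i] z ∈ S.IU)

lemma patB_true {z : ℝ} {i : ℕ} : S.patB z i = true ↔ S.G^[i] z ∈ S.IU :=
  ⟨fun h => of_decide_eq_true h, fun h => decide_eq_true h⟩

lemma mem_PSet_patB {z : ℝ} (hz : z ∈ Set.Icc (0:ℝ) 1) (d : ℕ) (p : ℕ → Bool)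
    (hp : ∀ i < d, p i = S.patB z i) : z ∈ S.PSet d p := by
  refine ⟨hz, fun i hi => ?_⟩
  rw [hp i hi]
  exact ⟨fun h => S.patB_true.mpr h, fun h => S.patB_true.mp h⟩

lemma Sd_eq_vB (z : ℝ) (d : ℕ) : S.Sd z d = vB d (S.patB z) := by
  apply Finset.sum_congr rfl
  intro i _
  unfold trm
  by_cases h : S.G^[i] z ∈ S.IU
  · rw [if_pos h, if_pos (S.patB_true.mpr h)]
  · rw [if_neg h, if_neg (fun hh => h (S.patB_true.mp hh))]

/-- The modulus-of-continuity bound for the distribution of ψ. -/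
lemma MOD {d m : ℕ} (hmd : m ≤ d) {u b : ℝ} (hb : b ≤ u + (2:ℝ)⁻¹ ^ d)
    (hbm : 0 < m → b < (2:ℝ)⁻¹ ^ m) :
    volume {z ∈ Set.Icc (0:ℝ) 1 | u < S.psi z ∧ S.psi z ≤ b} ≤
      2 * (ENNReal.ofReal S.lam ^ m * ENNReal.ofReal (max S.lam (1 - S.lam)) ^ (d - m)) := by
  classical
  set θ : ℝ := max S.lam (1 - S.lam) with hθ
  set BAD : Finset (Fin d → Bool) := Finset.univ.filter (fun p =>
    (u - (2:ℝ)⁻¹ ^ d < vB d (extp d p) ∧ vB d (extp d p) ≤ b) ∧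
      ∀ i : Fin d, (i : ℕ) < m → p i = true) with hBAD
  -- covering
  have hcover : {z ∈ Set.Icc (0:ℝ) 1 | u < S.psi z ∧ S.psi z ≤ b} ⊆
      ⋃ p ∈ BAD, S.PSet d (extp d p) := by
    intro z hz
    obtain ⟨hz1, hzu, hzb⟩ := hz
    have hfirst : ∀ i < m, S.patB z i = true := by
      intro i hi
      by_contra hh
      have hnot : S.G^[i] z ∉ S.IU := fun h => hh (S.patB_true.mpr h)
      have h1 := S.psi_lb hnot
      have h2 : (2:ℝ)⁻¹ ^ m ≤ (2:ℝ)⁻¹ ^ (i + 1) :=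
        pow_le_pow_of_le_one (by norm_num) (by norm_num) (by omega)
      have h3 := hbm (by omega)
      linarith
    set pz : Fin d → Bool := fun i => S.patB z i with hpz
    have hext : ∀ i (hi : i < d), extp d pz i = S.patB z i := by
      intro i hi
      rw [extp_lt pz hi]
    have hvB : vB d (extp d pz) = S.Sd z d := by
      rw [S.Sd_eq_vB]
      exact Finset.sum_congr rfl (fun i hi => by
        rw [hext i (Finset.mem_range.mp hi)])
    have hmemBAD : pz ∈ BAD := by
      rw [hBAD, Finset.mem_filter]
      refine ⟨Finset.mem_univ _, ⟨⟨?_, ?_⟩, ?_⟩⟩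
      · rw [hvB]
        have := S.psi_le_Sd z d
        linarith
      · rw [hvB]
        exact le_trans (S.Sd_le_psi z d) hzb
      · intro i hi
        have := hfirst i hi
        simpa [hpz] using this
    apply Set.mem_biUnion hmemBAD
    exact S.mem_PSet_patB hz1 d (extp d pz) (fun i hi => hext i hi)
  -- counting
  have hcard : BAD.card ≤ 2 := by
    set lo : ℤ := ⌊(u - (2:ℝ)⁻¹ ^ d) * 2 ^ d⌋ with hlo
    have h2d : (0:ℝ) < 2 ^ d := by positivity
    have hmap : ∀ p ∈ BAD, (nvB d (extp d p) : ℤ) ∈ Finset.Ioc lo (lo + 2) := by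
      intro p hp
      obtain ⟨⟨hv1, hv2⟩, _⟩ := (Finset.mem_filter.mp hp).2
      rw [Finset.mem_Ioc]
      constructor
      · rw [hlo]
        apply Int.floor_lt.mpr
        push_cast
        rw [nvB_cast]
        nlinarith
      · have hle : (nvB d (extp d p) : ℝ) ≤ (u - (2:ℝ)⁻¹ ^ d) * 2 ^ d + 2 := by
          rw [nvB_cast]
          have hpw : (2:ℝ)⁻¹ ^ d * 2 ^ d = 1 := by
            rw [inv_pow]
            field_simp
          nlinarith
        have : (nvB d (extp d p) : ℤ) ≤ ⌊(u - (2:ℝ)⁻¹ ^ d) * 2 ^ d + 2⌋ := by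
          apply Int.le_floor.mpr
          push_cast
          exact_mod_cast hle
        rw [show ((2:ℝ) : ℝ) = ((2:ℤ) : ℝ) by norm_num] at this
        rwa [Int.floor_add_intCast] at this
    have hinj : Set.InjOn (fun p => (nvB d (extp d p) : ℤ)) BAD := by
      intro p hp q hq heq
      have hreq : (nvB d (extp d p) : ℝ) = (nvB d (extp d q) : ℝ) := by
        have h' : (nvB d (extp d p) : ℤ) = (nvB d (extp d q) : ℤ) := by simpa using heq
        exact_mod_cast h'
      rw [nvB_cast, nvB_cast] at hreq
      have hveq : vB d (extp d p) = vB d (extp d q) := by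
        have := mul_right_cancel₀ (ne_of_gt h2d) hreq
        exact this
      funext i
      have := vB_inj d _ _ hveq i.1 i.2
      rwa [extp_lt p i.2, extp_lt q i.2] at this
    calc BAD.card ≤ (Finset.Ioc lo (lo + 2)).card :=
          Finset.card_le_card_of_injOn _ hmap hinj
    _ = 2 := by rw [Int.card_Ioc]; simp
  -- per-pattern bound
  have hbound : ∀ p ∈ BAD, volume (S.PSet d (extp d p)) ≤
      ENNReal.ofReal S.lam ^ m * ENNReal.ofReal θ ^ (d - m) := by
    intro p hp
    obtain ⟨_, htrue⟩ := (Finset.mem_filter.mp hp).2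
    refine le_trans (S.PSet_master d (extp d p)).2 ?_
    have hsplit : ∏ i ∈ Finset.range d,
        ENNReal.ofReal (if extp d p i then S.lam else 1 - S.lam) =
        (∏ i ∈ Finset.Ico 0 m, ENNReal.ofReal (if extp d p i then S.lam else 1 - S.lam)) *
        (∏ i ∈ Finset.Ico m d, ENNReal.ofReal (if extp d p i then S.lam else 1 - S.lam)) := by
      rw [Finset.prod_Ico_consecutive _ (Nat.zero_le m) hmd, ← Finset.range_eq_Ico]
    rw [hsplit]
    apply mul_le_mul'
    · have : ∀ i ∈ Finset.Ico 0 m,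
          ENNReal.ofReal (if extp d p i then S.lam else 1 - S.lam) = ENNReal.ofReal S.lam := by
        intro i hi
        have him : i < m := (Finset.mem_Ico.mp hi).2
        have hid : i < d := lt_of_lt_of_le him hmd
        rw [extp_lt p hid, htrue ⟨i, hid⟩ him, if_pos rfl]
      rw [Finset.prod_congr rfl this, Finset.prod_const, Nat.card_Ico, Nat.sub_zero]
    · have hle : ∀ i ∈ Finset.Ico m d,
          ENNReal.ofReal (if extp d p i then S.lam else 1 - S.lam) ≤ ENNReal.ofReal θ := by
        intro i _
        apply ENNReal.ofReal_le_ofReal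
        split_ifs
        · exact le_max_left _ _
        · exact le_max_right _ _
      calc _ ≤ ∏ _i ∈ Finset.Ico m d, ENNReal.ofReal θ := Finset.prod_le_prod' hle
      _ = ENNReal.ofReal θ ^ (d - m) := by rw [Finset.prod_const, Nat.card_Ico]
  calc volume {z ∈ Set.Icc (0:ℝ) 1 | u < S.psi z ∧ S.psi z ≤ b}
      ≤ volume (⋃ p ∈ BAD, S.PSet d (extp d p)) := measure_mono hcover
  _ ≤ ∑ p ∈ BAD, volume (S.PSet d (extp d p)) := measure_biUnion_finset_le _ _
  _ ≤ BAD.card • (ENNReal.ofReal S.lam ^ m * ENNReal.ofReal θ ^ (d - m)) :=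
      Finset.sum_le_card_nsmul _ _ _ hbound
  _ ≤ 2 * (ENNReal.ofReal S.lam ^ m * ENNReal.ofReal θ ^ (d - m)) := by
      rw [nsmul_eq_mul]
      apply mul_le_mul_left
      exact_mod_cast Nat.cast_le.mpr hcard

end CantorData
namespace CantorData
variable (S : CantorData)

noncomputable def Fe (t : ℝ) : ℝ≥0∞ := volume {z ∈ Set.Icc (0:ℝ) 1 | S.psi z ≤ t}

lemma mes_apply (A : Set ℝ) : S.mes A = volume (A ∩ Set.Icc 0 1) :=
  Measure.restrict_apply' measurableSet_Icc

lemma F_eq (t : ℝ) : S.F t = (S.Fe t).toReal := by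
  unfold F Fe
  rw [S.mes_apply]
  congr 2
  ext z
  simp only [Set.mem_inter_iff, Set.mem_setOf_eq]
  tauto

lemma Fe_le_one (t : ℝ) : S.Fe t ≤ 1 := by
  refine le_trans (measure_mono (fun z hz => hz.1)) ?_
  rw [Real.volume_Icc]
  norm_num

lemma Fe_ne_top (t : ℝ) : S.Fe t ≠ ⊤ := ne_top_of_le_ne_top ENNReal.one_ne_top (S.Fe_le_one t)

lemma Fe_mono : Monotone S.Fe := fun s t hst =>
  measure_mono (fun z hz => ⟨hz.1, le_trans hz.2 hst⟩)

lemma F_nonneg (t : ℝ) : 0 ≤ S.F t := by rw [S.F_eq]; exact ENNReal.toReal_nonneg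

lemma F_mono : Monotone S.F := fun s t hst => by
  rw [S.F_eq, S.F_eq]
  exact ENNReal.toReal_mono (S.Fe_ne_top t) (S.Fe_mono hst)

lemma Fe_one : S.Fe 1 = 1 := by
  unfold Fe
  have : {z ∈ Set.Icc (0:ℝ) 1 | S.psi z ≤ 1} = Set.Icc 0 1 := by
    ext z
    simp only [Set.mem_setOf_eq, and_iff_left_iff_imp]
    exact fun _ => S.psi_le_one z
  rw [this, Real.volume_Icc]
  norm_num

lemma F_one : S.F 1 = 1 := by rw [S.F_eq, S.Fe_one]; rfl

lemma F_le_one (t : ℝ) : S.F t ≤ 1 := by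
  rw [S.F_eq]
  calc (S.Fe t).toReal ≤ (1 : ℝ≥0∞).toReal :=
    ENNReal.toReal_mono ENNReal.one_ne_top (S.Fe_le_one t)
  _ = 1 := by simp

lemma ofReal_lam_pow_le_Fe (m : ℕ) : ENNReal.ofReal (S.lam ^ m) ≤ S.Fe ((2:ℝ)⁻¹ ^ m) := by
  have hsub : S.LamSet m ⊆ {z ∈ Set.Icc (0:ℝ) 1 | S.psi z ≤ (2:ℝ)⁻¹ ^ m} :=
    fun z hz => ⟨hz.1, S.psi_prefix hz.2⟩
  calc ENNReal.ofReal (S.lam ^ m) = ENNReal.ofReal S.lam ^ m :=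
        ENNReal.ofReal_pow S.lam_pos.le m
  _ = volume (S.LamSet m) := (S.LamSet_vol m).symm
  _ ≤ _ := measure_mono hsub

lemma F_lb (m : ℕ) : S.lam ^ m ≤ S.F ((2:ℝ)⁻¹ ^ m) := by
  rw [S.F_eq]
  have := S.ofReal_lam_pow_le_Fe m
  calc S.lam ^ m = (ENNReal.ofReal (S.lam ^ m)).toReal := by
        rw [ENNReal.toReal_ofReal (pow_nonneg S.lam_pos.le m)]
  _ ≤ _ := ENNReal.toReal_mono (S.Fe_ne_top _) this

lemma F_off_IU {z : ℝ} (h : z ∉ S.IU) : S.lam ≤ S.F (S.psi z) := by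
  have h1 : (2:ℝ)⁻¹ ≤ S.psi z := by
    have := S.psi_shift_out h
    have h2 := S.psi_nonneg (S.G z)
    linarith
  calc S.lam = S.lam ^ 1 := (pow_one _).symm
  _ ≤ S.F ((2:ℝ)⁻¹ ^ 1) := S.F_lb 1
  _ ≤ S.F (S.psi z) := S.F_mono (by rw [pow_one]; exact h1)

lemma theta_lt_one : max S.lam (1 - S.lam) < 1 :=
  max_lt S.lam_lt_one (by linarith [S.lam_pos])

lemma theta_pos : 0 < max S.lam (1 - S.lam) := lt_of_lt_of_le S.lam_pos (le_max_left _ _)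

lemma vol_IU_le : volume S.IU ≤ ENNReal.ofReal S.lam := by
  unfold IU
  refine le_trans (measure_biUnion_finset_le _ _) ?_
  have : ∀ i ∈ Finset.range S.kI,
      volume (Set.Icc (S.a (2 * i)) (S.a (2 * i + 1))) = ENNReal.ofReal (S.Ilen i) := by
    intro i _
    rw [Real.volume_Icc]; rfl
  rw [Finset.sum_congr rfl this, ← ENNReal.ofReal_sum_of_nonneg
    (fun i hi => (S.Ilen_pos (Finset.mem_range.mp hi)).le), ← S.lam_eq_sum]

lemma Fe_half_le (d : ℕ) :
    S.Fe 2⁻¹ ≤ ENNReal.ofReal S.lam + ENNReal.ofReal (max S.lam (1 - S.lam)) ^ (d + 1) := by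
  classical
  set pfx : ℕ → Bool := fun i => if i = 0 then false else true with hpfx
  have hsub : {z ∈ Set.Icc (0:ℝ) 1 | S.psi z ≤ 2⁻¹} ⊆ S.IU ∪ S.PSet (d + 1) pfx := by
    intro z hz
    obtain ⟨hz1, hz2⟩ := hz
    by_cases hIU : z ∈ S.IU
    · exact Or.inl hIU
    · right
      have hps := S.psi_shift_out hIU
      have hGz : S.psi (S.G z) ≤ 0 := by linarith
      have hGz0 : S.psi (S.G z) = 0 := le_antisymm hGz (S.psi_nonneg _)
      have hpat : ∀ i : ℕ, S.G^[i] (S.G z) ∈ S.IU := by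
        intro i
        by_contra hh
        have := S.psi_lb hh
        have : (0:ℝ) < (2:ℝ)⁻¹ ^ (i + 1) := by positivity
        linarith
      refine ⟨hz1, fun i hi => ?_⟩
      rcases Nat.eq_zero_or_pos i with rfl | hipos
      · simp only [Function.iterate_zero, id_eq, hpfx, if_pos rfl]
        simp [hIU]
      · obtain ⟨i', hieq⟩ := Nat.exists_eq_succ_of_ne_zero (Nat.pos_iff_ne_zero.mp hipos)
        subst hieq
        simp only [hpfx, if_neg (Nat.succ_ne_zero i')]
        rw [Function.iterate_succ_apply]
        simp [hpat i']
  calc S.Fe 2⁻¹ ≤ volume S.IU + volume (S.PSet (d + 1) pfx) :=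
        le_trans (measure_mono hsub) (measure_union_le _ _)
  _ ≤ ENNReal.ofReal S.lam + ENNReal.ofReal (max S.lam (1 - S.lam)) ^ (d + 1) := by
      apply add_le_add S.vol_IU_le
      refine le_trans (S.PSet_master (d + 1) pfx).2 ?_
      calc _ ≤ ∏ _i ∈ Finset.range (d + 1), ENNReal.ofReal (max S.lam (1 - S.lam)) := by
            apply Finset.prod_le_prod'
            intro i _
            apply ENNReal.ofReal_le_ofReal
            split_ifs
            · exact le_max_left _ _
            · exact le_max_right _ _
      _ = _ := by rw [Finset.prod_const, Finset.card_range]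

lemma F_half : S.F 2⁻¹ = S.lam := by
  have hub : S.F 2⁻¹ ≤ S.lam := by
    have key : ∀ d : ℕ, S.F 2⁻¹ ≤ S.lam + (max S.lam (1 - S.lam)) ^ (d + 1) := by
      intro d
      have h := S.Fe_half_le d
      rw [S.F_eq]
      have hfin : ENNReal.ofReal S.lam + ENNReal.ofReal (max S.lam (1 - S.lam)) ^ (d + 1) ≠ ⊤ := by
        apply ENNReal.add_ne_top.mpr
        exact ⟨ENNReal.ofReal_ne_top, by
          apply ENNReal.pow_ne_top ENNReal.ofReal_ne_top⟩
      calc (S.Fe 2⁻¹).toReal ≤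
          (ENNReal.ofReal S.lam + ENNReal.ofReal (max S.lam (1 - S.lam)) ^ (d + 1)).toReal :=
            ENNReal.toReal_mono hfin h
      _ = S.lam + (max S.lam (1 - S.lam)) ^ (d + 1) := by
          rw [ENNReal.toReal_add ENNReal.ofReal_ne_top (by
            apply ENNReal.pow_ne_top ENNReal.ofReal_ne_top),
            ENNReal.toReal_ofReal S.lam_pos.le, ← ENNReal.ofReal_pow S.theta_pos.le,
            ENNReal.toReal_ofReal (pow_nonneg S.theta_pos.le _)]
    have hlim : Filter.Tendsto (fun d : ℕ => S.lam + (max S.lam (1 - S.lam)) ^ (d + 1))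
        Filter.atTop (𝓝 (S.lam + 0)) := by
      apply Filter.Tendsto.const_add
      have := tendsto_pow_atTop_nhds_zero_of_lt_one S.theta_pos.le S.theta_lt_one
      exact this.comp (tendsto_add_atTop_nat 1)
    rw [add_zero] at hlim
    exact ge_of_tendsto hlim (Filter.Eventually.of_forall key)
  have hlb : S.lam ≤ S.F 2⁻¹ := by
    have := S.F_lb 1
    rwa [pow_one, pow_one] at this
  linarith

lemma F_shift {z : ℝ} (hz : z ∈ S.IU) : S.F (S.psi z) = S.lam * S.F (S.psi (S.G z)) := by
  have hps := S.psi_shift hz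
  rcases lt_or_ge (S.psi (S.G z)) 1 with h1 | h1
  · have hFe : S.Fe (2⁻¹ * S.psi (S.G z)) = ENNReal.ofReal S.lam * S.Fe (S.psi (S.G z)) := by
      set t := S.psi (S.G z) with ht
      have ht0 : 0 ≤ t := S.psi_nonneg _
      set B := {y ∈ Set.Icc (0:ℝ) 1 | S.psi y ≤ t} with hB
      have hBmeas : MeasurableSet B := S.meas_psi_le t
      have hBsub : B ⊆ Set.Icc 0 1 := fun y hy => hy.1
      have hdec : {z' ∈ Set.Icc (0:ℝ) 1 | S.psi z' ≤ 2⁻¹ * t} =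
          ⋃ i ∈ Finset.range S.kI, {z' ∈ S.Iset i | S.G z' ∈ B} := by
        ext w
        simp only [Set.mem_setOf_eq, Set.mem_iUnion, Finset.mem_range, exists_prop]
        constructor
        · rintro ⟨hw1, hw2⟩
          have hwIU : w ∈ S.IU := by
            by_contra hh
            have := S.psi_shift_out hh
            have h2 := S.psi_nonneg (S.G w)
            linarith
          obtain ⟨i, hi, hwi⟩ := S.mem_IU_iff.mp hwIU
          refine ⟨i, hi, hwi, S.hGmaps hw1, ?_⟩
          have := S.psi_shift hwIU
          linarith
        · rintro ⟨i, hi, hwi, hGw1, hGw2⟩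
          have hwIU : w ∈ S.IU := S.mem_IU_iff.mpr ⟨i, hi, hwi⟩
          refine ⟨S.Iset_subset_Icc hi hwi, ?_⟩
          have := S.psi_shift hwIU
          linarith
      unfold Fe
      rw [hdec, measure_biUnion_finset]
      · have : ∀ i ∈ Finset.range S.kI,
            volume {z' ∈ S.Iset i | S.G z' ∈ B} = ENNReal.ofReal (S.Ilen i) * volume B := by
          intro i hi
          exact (S.I_branch (Finset.mem_range.mp hi) hBmeas hBsub).1
        rw [Finset.sum_congr rfl this, ← Finset.sum_mul, ← ENNReal.ofReal_sum_of_nonneg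
          (fun i hi => (S.Ilen_pos (Finset.mem_range.mp hi)).le), ← S.lam_eq_sum]
      · intro i hi i' hi' hne
        simp only [Function.onFun]
        rw [Set.disjoint_iff_inter_eq_empty, ← Set.subset_empty_iff,
          ← S.Iset_disjoint (Finset.mem_range.mp hi) (Finset.mem_range.mp hi') hne]
        exact fun w hw => ⟨hw.1.1, hw.2.1⟩
      · intro i hi
        exact (S.I_branch (Finset.mem_range.mp hi) hBmeas hBsub).2
    rw [hps, S.F_eq, S.F_eq, hFe, ENNReal.toReal_mul, ENNReal.toReal_ofReal S.lam_pos.le]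
  · have h1' : S.psi (S.G z) = 1 := le_antisymm (S.psi_le_one _) h1
    rw [hps, h1', mul_one, S.F_half, S.F_one, mul_one]

lemma F_zero : S.F 0 = 0 := by
  have key : ∀ d : ℕ, S.F 0 ≤ S.lam ^ d := by
    intro d
    have hsub : {z ∈ Set.Icc (0:ℝ) 1 | S.psi z ≤ 0} ⊆ S.LamSet d := by
      intro z hz
      refine ⟨hz.1, fun i _ => ?_⟩
      by_contra hh
      have := S.psi_lb hh
      have h2 : (0:ℝ) < (2:ℝ)⁻¹ ^ (i + 1) := by positivity
      linarith [hz.2]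
    rw [S.F_eq]
    calc (S.Fe 0).toReal ≤ (volume (S.LamSet d)).toReal := by
          apply ENNReal.toReal_mono
          · rw [S.LamSet_vol]
            exact ENNReal.pow_ne_top ENNReal.ofReal_ne_top
          · exact measure_mono hsub
    _ = S.lam ^ d := by
        rw [S.LamSet_vol, ← ENNReal.ofReal_pow S.lam_pos.le,
          ENNReal.toReal_ofReal (pow_nonneg S.lam_pos.le d)]
  have hlim : Filter.Tendsto (fun d : ℕ => S.lam ^ d) Filter.atTop (𝓝 0) :=
    tendsto_pow_atTop_nhds_zero_of_lt_one S.lam_pos.le S.lam_lt_one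
  have := ge_of_tendsto hlim (Filter.Eventually.of_forall key)
  linarith [S.F_nonneg 0]

lemma F_diff_le {x y : ℝ} (hxy : x ≤ y) (d : ℕ) (h : y ≤ x + (2:ℝ)⁻¹ ^ d) :
    S.F y - S.F x ≤ 2 * (max S.lam (1 - S.lam)) ^ d := by
  have hsub : {z ∈ Set.Icc (0:ℝ) 1 | S.psi z ≤ y} ⊆
      {z ∈ Set.Icc (0:ℝ) 1 | S.psi z ≤ x} ∪ {z ∈ Set.Icc (0:ℝ) 1 | x < S.psi z ∧ S.psi z ≤ y} := by
    intro z hz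
    rcases le_or_gt (S.psi z) x with h1 | h1
    · exact Or.inl ⟨hz.1, h1⟩
    · exact Or.inr ⟨hz.1, h1, hz.2⟩
  have hMOD := S.MOD (Nat.zero_le d) h (fun hh => absurd hh (lt_irrefl 0))
  rw [pow_zero, one_mul, Nat.sub_zero] at hMOD
  have hv : volume {z ∈ Set.Icc (0:ℝ) 1 | x < S.psi z ∧ S.psi z ≤ y} ≠ ⊤ :=
    ne_top_of_le_ne_top (by
      apply ENNReal.mul_ne_top (by norm_num)
      exact ENNReal.pow_ne_top ENNReal.ofReal_ne_top) hMOD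
  have h2 : S.Fe y ≤ S.Fe x + volume {z ∈ Set.Icc (0:ℝ) 1 | x < S.psi z ∧ S.psi z ≤ y} :=
    le_trans (measure_mono hsub) (measure_union_le _ _)
  have h3 : S.F y ≤ S.F x +
      (volume {z ∈ Set.Icc (0:ℝ) 1 | x < S.psi z ∧ S.psi z ≤ y}).toReal := by
    rw [S.F_eq, S.F_eq, ← ENNReal.toReal_add (S.Fe_ne_top x) hv]
    exact ENNReal.toReal_mono (ENNReal.add_ne_top.mpr ⟨S.Fe_ne_top x, hv⟩) h2
  have h4 : (volume {z ∈ Set.Icc (0:ℝ) 1 | x < S.psi z ∧ S.psi z ≤ y}).toReal ≤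
      2 * (max S.lam (1 - S.lam)) ^ d := by
    calc _ ≤ (2 * ENNReal.ofReal (max S.lam (1 - S.lam)) ^ d).toReal :=
          ENNReal.toReal_mono (by
            apply ENNReal.mul_ne_top (by norm_num)
            exact ENNReal.pow_ne_top ENNReal.ofReal_ne_top) hMOD
    _ = 2 * (max S.lam (1 - S.lam)) ^ d := by
        rw [ENNReal.toReal_mul, ← ENNReal.ofReal_pow S.theta_pos.le,
          ENNReal.toReal_ofReal (pow_nonneg S.theta_pos.le d)]
        norm_num
  linarith

lemma F_cont : Continuous S.F := by
  rw [Metric.continuous_iff]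
  intro x ε hε
  obtain ⟨d, hd⟩ := exists_pow_lt_of_lt_one (by linarith : (0:ℝ) < ε / 2)
    (S.theta_lt_one)
  refine ⟨(2:ℝ)⁻¹ ^ d, by positivity, fun y hy => ?_⟩
  rw [Real.dist_eq] at hy ⊢
  have hbd : 2 * (max S.lam (1 - S.lam)) ^ d < ε := by linarith
  rw [abs_lt] at hy
  rcases le_or_gt x y with h | h
  · have h1 := S.F_diff_le h d (by linarith)
    have h2 := S.F_mono h
    rw [abs_of_nonneg (by linarith)]
    linarith
  · have h1 := S.F_diff_le h.le d (by linarith)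
    have h2 := S.F_mono h.le
    rw [abs_of_nonpos (by linarith)]
    linarith

lemma F_surj {s : ℝ} (h0 : 0 ≤ s) (h1 : s ≤ 1) : ∃ t ∈ Set.Icc (0:ℝ) 1, S.F t = s := by
  have := intermediate_value_Icc (by norm_num : (0:ℝ) ≤ 1) S.F_cont.continuousOn
  have hmem : s ∈ Set.Icc (S.F 0) (S.F 1) := by
    rw [S.F_zero, S.F_one]; exact ⟨h0, h1⟩
  obtain ⟨t, ht, hFt⟩ := this hmem
  exact ⟨t, ht, hFt⟩

lemma meas_Fpsi_lt (c : ℝ) : MeasurableSet {z ∈ Set.Icc (0:ℝ) 1 | S.F (S.psi z) < c} := by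
  have hg : Measurable (S.F ∘ ENNReal.toReal ∘ S.psie) :=
    (S.F_mono.measurable).comp (ENNReal.measurable_toReal.comp S.psie_meas)
  have : {z ∈ Set.Icc (0:ℝ) 1 | S.F (S.psi z) < c} =
      Set.Icc 0 1 ∩ (S.F ∘ ENNReal.toReal ∘ S.psie) ⁻¹' (Set.Iio c) := by
    ext z
    simp only [Set.mem_setOf_eq, Set.mem_inter_iff, Set.mem_preimage, Function.comp_apply,
      Set.mem_Iio]
    constructor
    · rintro ⟨hz, hlt⟩
      refine ⟨hz, ?_⟩
      rw [S.psie_eq hz, ENNReal.toReal_ofReal (S.psi_nonneg z)]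
      exact hlt
    · rintro ⟨hz, hlt⟩
      rw [S.psie_eq hz, ENNReal.toReal_ofReal (S.psi_nonneg z)] at hlt
      exact ⟨hz, hlt⟩
  rw [this]
  exact measurableSet_Icc.inter (hg measurableSet_Iio)

lemma measFpsi_le {e : ℝ} (he0 : 0 ≤ e) :
    volume {z ∈ Set.Icc (0:ℝ) 1 | S.F (S.psi z) ≤ e} ≤ ENNReal.ofReal e := by
  set T : Set ℝ := {t ∈ Set.Icc (0:ℝ) 1 | S.F t ≤ e} with hT
  have hTclosed : IsClosed T := by
    have : T = Set.Icc 0 1 ∩ S.F ⁻¹' (Set.Iic e) := by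
      ext t; simp only [hT, Set.mem_setOf_eq, Set.mem_inter_iff, Set.mem_preimage, Set.mem_Iic]
    rw [this]
    exact isClosed_Icc.inter (IsClosed.preimage S.F_cont isClosed_Iic)
  have hTne : T.Nonempty := ⟨0, ⟨le_refl 0, by norm_num⟩, by rw [S.F_zero]; exact he0⟩
  have hTbdd : BddAbove T := BddAbove.mono (fun t ht => ht.1) bddAbove_Icc
  have hTsup := hTclosed.csSup_mem hTne hTbdd
  have hsub : {z ∈ Set.Icc (0:ℝ) 1 | S.F (S.psi z) ≤ e} ⊆
      {z ∈ Set.Icc (0:ℝ) 1 | S.psi z ≤ sSup T} := by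
    intro z hz
    refine ⟨hz.1, le_csSup hTbdd ?_⟩
    exact ⟨⟨S.psi_nonneg z, S.psi_le_one z⟩, hz.2⟩
  refine le_trans (measure_mono hsub) ?_
  have : S.Fe (sSup T) ≤ ENNReal.ofReal e := by
    rw [ENNReal.le_ofReal_iff_toReal_le (S.Fe_ne_top _) he0, ← S.F_eq]
    exact hTsup.2
  exact this

lemma vol_ne_top_of_sub_Icc {A : Set ℝ} (h : A ⊆ Set.Icc 0 1) : volume A ≠ ⊤ := by
  refine ne_top_of_le_ne_top ?_ (measure_mono h)
  rw [Real.volume_Icc]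
  exact ENNReal.ofReal_ne_top

lemma measFpsi_window_lower {c e : ℝ} (hc0 : 0 ≤ c) (hce : c ≤ e) (he1 : e ≤ 1) :
    ENNReal.ofReal (e - c) ≤
      volume {z ∈ Set.Icc (0:ℝ) 1 | c ≤ S.F (S.psi z) ∧ S.F (S.psi z) ≤ e} := by
  obtain ⟨tc, htc, hFtc⟩ := S.F_surj hc0 (by linarith)
  obtain ⟨te, hte, hFte⟩ := S.F_surj (by linarith : (0:ℝ) ≤ e) he1
  have hsub : {z ∈ Set.Icc (0:ℝ) 1 | tc ≤ S.psi z ∧ S.psi z ≤ te} ⊆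
      {z ∈ Set.Icc (0:ℝ) 1 | c ≤ S.F (S.psi z) ∧ S.F (S.psi z) ≤ e} := by
    intro z hz
    exact ⟨hz.1, by rw [← hFtc]; exact S.F_mono hz.2.1, by rw [← hFte]; exact S.F_mono hz.2.2⟩
  refine le_trans ?_ (measure_mono hsub)
  have hsplit : S.Fe te ≤ volume {z ∈ Set.Icc (0:ℝ) 1 | tc ≤ S.psi z ∧ S.psi z ≤ te} +
      S.Fe tc := by
    refine le_trans (measure_mono ?_) (measure_union_le _ _)
    intro z hz
    rcases le_or_gt tc (S.psi z) with h | h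
    · exact Or.inl ⟨hz.1, h, hz.2⟩
    · exact Or.inr ⟨hz.1, h.le⟩
  have hvfin : volume {z ∈ Set.Icc (0:ℝ) 1 | tc ≤ S.psi z ∧ S.psi z ≤ te} ≠ ⊤ :=
    vol_ne_top_of_sub_Icc (fun z hz => hz.1)
  rw [ENNReal.ofReal_le_iff_le_toReal hvfin]
  have h1 : (S.Fe te).toReal ≤
      (volume {z ∈ Set.Icc (0:ℝ) 1 | tc ≤ S.psi z ∧ S.psi z ≤ te}).toReal + (S.Fe tc).toReal := by
    rw [← ENNReal.toReal_add hvfin (S.Fe_ne_top tc)]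
    exact ENNReal.toReal_mono (ENNReal.add_ne_top.mpr ⟨hvfin, S.Fe_ne_top tc⟩) hsplit
  rw [← S.F_eq, ← S.F_eq] at h1
  rw [hFtc, hFte] at h1
  linarith

lemma measFpsi_window_upper {c e : ℝ} (hc0 : 0 ≤ c) (hc1 : c ≤ 1) (hce : c ≤ e) :
    volume {z ∈ Set.Icc (0:ℝ) 1 | c ≤ S.F (S.psi z) ∧ S.F (S.psi z) ≤ e} ≤
      ENNReal.ofReal (e - c) := by
  set A := {z ∈ Set.Icc (0:ℝ) 1 | S.F (S.psi z) ≤ e} with hA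
  set B := {z ∈ Set.Icc (0:ℝ) 1 | S.F (S.psi z) < c} with hB
  have hBA : B ⊆ A := fun z hz => ⟨hz.1, by have := hz.2; linarith⟩
  have htarget : {z ∈ Set.Icc (0:ℝ) 1 | c ≤ S.F (S.psi z) ∧ S.F (S.psi z) ≤ e} = A \ B := by
    ext z
    simp only [hA, hB, Set.mem_setOf_eq, Set.mem_diff, not_and, not_lt]
    constructor
    · rintro ⟨hz, h1, h2⟩; exact ⟨⟨hz, h2⟩, fun _ => h1⟩
    · rintro ⟨⟨hz, h2⟩, h1⟩; exact ⟨hz, h1 hz, h2⟩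
  have hvBfin : volume B ≠ ⊤ := vol_ne_top_of_sub_Icc (fun z hz => hz.1)
  have hvDfin : volume (A \ B) ≠ ⊤ := vol_ne_top_of_sub_Icc (fun z hz => hz.1.1)
  have hkey := measure_inter_add_diff (μ := volume) A (S.meas_Fpsi_lt c)
  have hAB : A ∩ B = B := Set.inter_eq_self_of_subset_right hBA
  rw [hAB] at hkey
  have hBlower : ENNReal.ofReal c ≤ volume B := by
    rcases eq_or_lt_of_le hc0 with h | h
    · rw [← h]; simp
    · rw [ENNReal.ofReal_le_iff_le_toReal hvBfin]
      have key : ∀ ε : ℝ, 0 < ε → ε ≤ c → c - ε ≤ (volume B).toReal := by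
        intro ε hε hεc
        obtain ⟨t, ht, hFt⟩ := S.F_surj (by linarith : (0:ℝ) ≤ c - ε) (by linarith)
        have hsub2 : {z ∈ Set.Icc (0:ℝ) 1 | S.psi z ≤ t} ⊆ B := by
          intro z hz
          refine ⟨hz.1, ?_⟩
          calc S.F (S.psi z) ≤ S.F t := S.F_mono hz.2
          _ = c - ε := hFt
          _ < c := by linarith
        have h2 : S.Fe t ≤ volume B := measure_mono hsub2
        have h3 := ENNReal.toReal_mono hvBfin h2
        rw [← S.F_eq, hFt] at h3
        exact h3
      apply le_of_forall_pos_le_add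
      intro ε hε
      have := key (min ε c) (lt_min hε h) (min_le_right _ _)
      have hm : c - min ε c ≥ c - ε := by
        have := min_le_left ε c
        linarith
      linarith
  have hupper : volume A ≤ ENNReal.ofReal e := S.measFpsi_le (le_trans hc0 hce)
  rw [htarget]
  have hsum : volume (A \ B) + ENNReal.ofReal c ≤ ENNReal.ofReal (e - c) + ENNReal.ofReal c := by
    calc volume (A \ B) + ENNReal.ofReal c ≤ volume (A \ B) + volume B :=
          add_le_add_right hBlower _
    _ = volume A := by rw [add_comm]; exact hkey
    _ ≤ ENNReal.ofReal e := hupper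
    _ = ENNReal.ofReal (e - c) + ENNReal.ofReal c := by
        rw [← ENNReal.ofReal_add (by linarith) hc0]
        congr 1
        ring
  exact (ENNReal.add_le_add_iff_right ENNReal.ofReal_ne_top).mp hsum

end CantorData
lemma rpow_lt_key {α : ℝ} (hα : 0 < α) {x y : ℝ} (hx : 0 ≤ x) (hy : 0 ≤ y) :
    x < y ↔ x ^ α < y ^ α := by
  constructor
  · intro h; exact Real.rpow_lt_rpow hx h hα
  · intro h
    by_contra hh
    push_neg at hh
    exact absurd h (not_lt.mpr (Real.rpow_le_rpow hy hh hα.le))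

lemma inv_swap_lt {q c : ℝ} (hq : 0 < q) (hc : 0 < c) : q < c⁻¹ ↔ c < q⁻¹ := by
  have hcc : c⁻¹ * c = 1 := inv_mul_cancel₀ (ne_of_gt hc)
  have hqq : q⁻¹ * q = 1 := inv_mul_cancel₀ (ne_of_gt hq)
  have hc' : 0 < c⁻¹ := inv_pos.mpr hc
  have hq' : 0 < q⁻¹ := inv_pos.mpr hq
  constructor
  · intro h; nlinarith [mul_lt_mul_of_pos_right h hc]
  · intro h; nlinarith [mul_lt_mul_of_pos_right h hq]

lemma rpow_window {α : ℝ} (hα : 0 < α) {q c : ℝ} (hq : 0 < q) (hc : 0 < c) :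
    q ^ (1/α) < c ^ (-(1/α)) ↔ c < q⁻¹ := by
  have h1 : (q ^ (1/α)) ^ α = q := by
    rw [← Real.rpow_mul hq.le, one_div, inv_mul_cancel₀ (ne_of_gt hα), Real.rpow_one]
  have h2 : (c ^ (-(1/α))) ^ α = c⁻¹ := by
    rw [← Real.rpow_mul hc.le, neg_mul, one_div, inv_mul_cancel₀ (ne_of_gt hα),
      Real.rpow_neg_one]
  rw [rpow_lt_key hα (Real.rpow_nonneg hq.le _) (Real.rpow_nonneg hc.le _), h1, h2]
  exact inv_swap_lt hq hc

namespace CantorData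
variable (S : CantorData)

lemma phi_iff {α τ : ℝ} (hα : 0 < α) (hτ : 0 < τ) {n : ℕ} (hn : 1 ≤ n) {c : ℝ} (hc0 : 0 ≤ c) :
    ENNReal.ofReal (S.un α τ n) < ENNReal.ofReal c ^ (-(1/α)) ↔ c < τ / n := by
  have hq : (0:ℝ) < (n:ℝ) / τ := by
    apply div_pos _ hτ
    exact_mod_cast hn
  have hqinv : ((n:ℝ) / τ)⁻¹ = τ / n := inv_div _ _
  rcases eq_or_lt_of_le hc0 with h0 | h0
  · constructor
    · intro _
      rw [← h0]
      exact div_pos hτ (by exact_mod_cast hn)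
    · intro _
      rw [← h0, ENNReal.ofReal_zero, ENNReal.zero_rpow_of_neg (by
        rw [neg_lt, neg_zero]; positivity)]
      exact ENNReal.ofReal_lt_top.trans_le le_top
  · rw [ENNReal.ofReal_rpow_of_pos h0]
    have hup : 0 < c ^ (-(1/α)) := Real.rpow_pos_of_pos h0 _
    rw [ENNReal.ofReal_lt_ofReal_iff hup]
    unfold un
    rw [rpow_window hα hq h0, hqinv]

lemma Un_eq {α τ : ℝ} (hα : 0 < α) (hτ : 0 < τ) {n : ℕ} (hn : 1 ≤ n) :
    S.Un α τ n = {z ∈ Set.Icc (0:ℝ) 1 | S.F (S.psi z) < τ / n} := by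
  ext z
  simp only [Un, X, phi, Function.iterate_zero, id_eq, Set.mem_setOf_eq]
  constructor
  · rintro ⟨hz, hlt⟩
    exact ⟨hz, (S.phi_iff hα hτ hn (S.F_nonneg _)).mp hlt⟩
  · rintro ⟨hz, hlt⟩
    exact ⟨hz, (S.phi_iff hα hτ hn (S.F_nonneg _)).mpr hlt⟩

lemma UnPair_eq {α τ' τ'' : ℝ} (hα : 0 < α) (h1 : 0 < τ'') (h2 : τ'' < τ') {n : ℕ} (hn : 1 ≤ n) :
    S.UnPair α τ' τ'' n =
      {z ∈ Set.Icc (0:ℝ) 1 | τ'' / n ≤ S.F (S.psi z) ∧ S.F (S.psi z) < τ' / n} := by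
  unfold UnPair
  rw [S.Un_eq hα (by linarith) hn, S.Un_eq hα h1 hn]
  ext z
  simp only [Set.mem_diff, Set.mem_setOf_eq, not_and, not_lt]
  constructor
  · rintro ⟨⟨hz, hlt⟩, hnot⟩
    exact ⟨hz, hnot hz, hlt⟩
  · rintro ⟨hz, hge, hlt⟩
    exact ⟨⟨hz, hlt⟩, fun _ => hge⟩

lemma UnPair1_eq {α τ' τ'' : ℝ} (hα : 0 < α) (h1 : 0 < τ'') (h2 : τ'' < τ') {n : ℕ}
    (hn : 1 ≤ n) (hlam : τ' / n ≤ S.lam) :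
    S.UnPair1 α τ' τ'' n = {z ∈ Set.Icc (0:ℝ) 1 | z ∈ S.IU ∧
      max τ'' (S.lam * τ') / n ≤ S.F (S.psi z) ∧ S.F (S.psi z) < τ' / n} := by
  have hτ' : 0 < τ' := by linarith
  have hnR : (0:ℝ) < n := by exact_mod_cast hn
  unfold UnPair1
  rw [S.UnPair_eq hα h1 h2 hn]
  ext z
  simp only [Set.mem_inter_iff, Set.mem_preimage, Set.mem_diff, Set.mem_setOf_eq]
  constructor
  · rintro ⟨⟨hz, hge, hlt⟩, hGz, hGnot⟩
    have hzIU : z ∈ S.IU := by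
      by_contra hh
      have := S.F_off_IU hh
      linarith
    have hshift := S.F_shift hzIU
    refine ⟨hz, hzIU, ?_, hlt⟩
    have hcase : ¬ (τ'' / n ≤ S.F (S.psi (S.G z)) ∧ S.F (S.psi (S.G z)) < τ' / n) :=
      fun hh => hGnot ⟨hGz, hh⟩
    rw [not_and_or, not_le, not_lt] at hcase
    have hlam01 : 0 < S.lam := S.lam_pos
    have hlam1 : S.lam < 1 := S.lam_lt_one
    rw [div_le_iff₀ hnR]
    apply max_le
    · rw [div_le_iff₀ hnR] at hge
      exact hge
    · rcases hcase with hA | hB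
      · exfalso
        have : S.F (S.psi z) < S.lam * (τ'' / n) := by
          rw [hshift]
          exact mul_lt_mul_of_pos_left hA hlam01
        have hpos : 0 < τ'' / n := div_pos h1 hnR
        nlinarith
      · have hmul : S.lam * τ' / n ≤ S.F (S.psi z) := by
          rw [mul_div_assoc, hshift]
          exact mul_le_mul_of_nonneg_left hB hlam01.le
        exact (div_le_iff₀ hnR).mp hmul
  · rintro ⟨hz, hzIU, hgeβ, hlt⟩
    have hshift := S.F_shift hzIU
    have hlam01 : 0 < S.lam := S.lam_pos
    have hge : τ'' / n ≤ S.F (S.psi z) := by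
      refine le_trans ?_ hgeβ
      exact (div_le_div_iff_of_pos_right hnR).mpr (le_max_left _ _)
    have hgeL : S.lam * τ' / n ≤ S.F (S.psi z) := by
      refine le_trans ?_ hgeβ
      exact (div_le_div_iff_of_pos_right hnR).mpr (le_max_right _ _)
    refine ⟨⟨hz, hge, hlt⟩, S.hGmaps (S.IU_subset_Icc hzIU), ?_⟩
    rintro ⟨-, -, hlt'⟩
    have : S.F (S.psi z) < S.lam * (τ' / n) := by
      rw [hshift]
      exact mul_lt_mul_of_pos_left hlt' hlam01
    rw [mul_div_assoc] at hgeL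
    linarith

end CantorData
namespace CantorData
variable (S : CantorData)

lemma F_diff_le' {x y : ℝ} (hxy : x ≤ y) {d m : ℕ} (hmd : m ≤ d)
    (h : y ≤ x + (2:ℝ)⁻¹ ^ d) (hm : 0 < m → y < (2:ℝ)⁻¹ ^ m) :
    S.F y - S.F x ≤ 2 * S.lam ^ m * (max S.lam (1 - S.lam)) ^ (d - m) := by
  have hsub : {z ∈ Set.Icc (0:ℝ) 1 | S.psi z ≤ y} ⊆
      {z ∈ Set.Icc (0:ℝ) 1 | S.psi z ≤ x} ∪ {z ∈ Set.Icc (0:ℝ) 1 | x < S.psi z ∧ S.psi z ≤ y} := by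
    intro z hz
    rcases le_or_gt (S.psi z) x with h1 | h1
    · exact Or.inl ⟨hz.1, h1⟩
    · exact Or.inr ⟨hz.1, h1, hz.2⟩
  have hMOD := S.MOD hmd h hm
  have hBfin : (2 : ℝ≥0∞) * (ENNReal.ofReal S.lam ^ m *
      ENNReal.ofReal (max S.lam (1 - S.lam)) ^ (d - m)) ≠ ⊤ := by
    apply ENNReal.mul_ne_top (by norm_num)
    exact ENNReal.mul_ne_top (ENNReal.pow_ne_top ENNReal.ofReal_ne_top)
      (ENNReal.pow_ne_top ENNReal.ofReal_ne_top)
  have hv : volume {z ∈ Set.Icc (0:ℝ) 1 | x < S.psi z ∧ S.psi z ≤ y} ≠ ⊤ :=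
    ne_top_of_le_ne_top hBfin hMOD
  have h3 : S.F y ≤ S.F x +
      (volume {z ∈ Set.Icc (0:ℝ) 1 | x < S.psi z ∧ S.psi z ≤ y}).toReal := by
    rw [S.F_eq, S.F_eq, ← ENNReal.toReal_add (S.Fe_ne_top x) hv]
    exact ENNReal.toReal_mono (ENNReal.add_ne_top.mpr ⟨S.Fe_ne_top x, hv⟩)
      (le_trans (measure_mono hsub) (measure_union_le _ _))
  have h4 : (volume {z ∈ Set.Icc (0:ℝ) 1 | x < S.psi z ∧ S.psi z ≤ y}).toReal ≤
      2 * S.lam ^ m * (max S.lam (1 - S.lam)) ^ (d - m) := by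
    calc _ ≤ ((2:ℝ≥0∞) * (ENNReal.ofReal S.lam ^ m *
        ENNReal.ofReal (max S.lam (1 - S.lam)) ^ (d - m))).toReal :=
          ENNReal.toReal_mono hBfin hMOD
    _ = 2 * S.lam ^ m * (max S.lam (1 - S.lam)) ^ (d - m) := by
        rw [ENNReal.toReal_mul, ENNReal.toReal_mul, ← ENNReal.ofReal_pow S.lam_pos.le,
          ← ENNReal.ofReal_pow S.theta_pos.le, ENNReal.toReal_ofReal
            (pow_nonneg S.lam_pos.le m), ENNReal.toReal_ofReal
            (pow_nonneg S.theta_pos.le _)]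
        norm_num
        ring
  linarith

lemma jn_le {τ : ℝ} (hτ : 0 < τ) {n : ℕ} (hn : 1 ≤ n) : S.lam ^ (S.jn τ n) ≤ τ / n := by
  have hne : {j : ℕ | S.lam ^ j ≤ τ / n}.Nonempty := by
    obtain ⟨j, hj⟩ := exists_pow_lt_of_lt_one
      (div_pos hτ (by exact_mod_cast hn : (0:ℝ) < n)) S.lam_lt_one
    exact ⟨j, hj.le⟩
  exact Nat.sInf_mem hne

lemma jn_pos {τ : ℝ} (hτ : 0 < τ) {n : ℕ} (hn : τ < n) : 1 ≤ S.jn τ n := by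
  have hn1 : 1 ≤ n := by
    by_contra hh
    push_neg at hh
    interval_cases n
    · simp at hn; linarith
  by_contra hh
  push_neg at hh
  have h0 : S.jn τ n = 0 := by omega
  have h2 := S.jn_le hτ hn1
  rw [h0, pow_zero] at h2
  have hnR : (0:ℝ) < n := by exact_mod_cast hn1
  rw [le_div_iff₀ hnR, one_mul] at h2
  linarith

lemma jn_lt {τ : ℝ} (hτ : 0 < τ) {n : ℕ} (hn : τ < n) :
    τ / n < S.lam ^ (S.jn τ n - 1) := by
  have hpos := S.jn_pos hτ hn
  have hlt : S.jn τ n - 1 < S.jn τ n := by omega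
  have hnm : S.jn τ n - 1 ∉ {j : ℕ | S.lam ^ j ≤ τ / n} := Nat.notMem_of_lt_sInf hlt
  simp only [Set.mem_setOf_eq, not_le] at hnm
  exact hnm

lemma jn_ge {τ : ℝ} (hτ : 0 < τ) (m : ℕ) {n : ℕ} (hn1 : 1 ≤ n)
    (hn : τ / S.lam ^ m < n) : m ≤ S.jn τ n := by
  by_contra hh
  push_neg at hh
  have h1 : S.lam ^ m ≤ S.lam ^ (S.jn τ n) :=
    pow_le_pow_of_le_one S.lam_pos.le S.lam_lt_one.le (by omega)
  have h2 := S.jn_le hτ hn1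
  have hnR : (0:ℝ) < n := by exact_mod_cast hn1
  have hlm : (0:ℝ) < S.lam ^ m := pow_pos S.lam_pos m
  rw [div_lt_iff₀ hlm] at hn
  have : S.lam ^ m ≤ τ / n := le_trans h1 h2
  rw [le_div_iff₀ hnR] at this
  nlinarith

lemma jn_tendsto {τ : ℝ} (hτ : 0 < τ) :
    Filter.Tendsto (fun n => S.jn τ n) Filter.atTop Filter.atTop := by
  rw [Filter.tendsto_atTop]
  intro m
  rw [Filter.eventually_atTop]
  refine ⟨⌈τ / S.lam ^ m⌉₊ + 1, fun n hn => ?_⟩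
  have h1 : τ / S.lam ^ m < n := by
    calc τ / S.lam ^ m ≤ (⌈τ / S.lam ^ m⌉₊ : ℝ) := Nat.le_ceil _
    _ < n := by exact_mod_cast hn
  exact S.jn_ge hτ m (by omega) h1

lemma piece_props {W : Set ℝ} (hW : W ∈ S.PieceFamily) :
    W ⊆ Set.Icc 0 1 ∧ (W ⊆ S.IU ∨ W ∩ S.IU = ∅) := by
  have hk := S.hkI
  rcases hW with (⟨i, hi, rfl⟩ | ⟨i, hi, rfl⟩) | hW
  · dsimp only
    have hi' : i < S.kI := hi
    refine ⟨S.Iset_subset_Icc hi', Or.inl ?_⟩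
    intro z hz
    exact S.mem_IU_iff.mpr ⟨i, hi', hz⟩
  · dsimp only
    have hi' : i + 1 < S.kI := hi
    have hmem : Set.Ioo (S.a (2 * i + 1)) (S.a (2 * i + 2)) = S.Jset (i + 1) := by
      unfold Jset
      rw [if_neg (by omega), if_neg (by omega : ¬ i + 1 = S.kI)]
      have e1 : 2 * (i + 1) - 1 = 2 * i + 1 := by omega
      have e2 : 2 * (i + 1) = 2 * i + 2 := by omega
      rw [e1, e2]
    rw [hmem]
    exact ⟨S.Jset_subset_Icc (by omega), Or.inr (S.Jset_disjoint_IU (by omega))⟩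
  · rcases hW with rfl | rfl
    · have hmem : Set.Ico (0:ℝ) (S.a 0) = S.Jset 0 := by
        unfold Jset
        rw [if_pos rfl]
      rw [hmem]
      exact ⟨S.Jset_subset_Icc (by omega), Or.inr (S.Jset_disjoint_IU (by omega))⟩
    · have hmem : Set.Ioc (S.a (2 * S.kI - 1)) 1 = S.Jset S.kI := by
        unfold Jset
        rw [if_neg (by omega), if_pos rfl]
      rw [hmem]
      exact ⟨S.Jset_subset_Icc (le_refl _), Or.inr (S.Jset_disjoint_IU (le_refl _))⟩

lemma cyl_mem {d : ℕ} {w : ℕ → Set ℝ} {z : ℝ} (hz : z ∈ S.Cyl d w) {k : ℕ} (hk : k < d) :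
    S.G^[k] z ∈ w k := by
  unfold Cyl at hz
  simp only [Set.mem_iInter, Finset.mem_range] at hz
  exact hz k hk

lemma cyl_sub_Icc {d : ℕ} {w : ℕ → Set ℝ} (hd : 1 ≤ d)
    (hw : ∀ k < d, w k ∈ S.PieceFamily) : S.Cyl d w ⊆ Set.Icc 0 1 := by
  intro z hz
  have := S.cyl_mem hz (show 0 < d by omega)
  simp only [Function.iterate_zero, id_eq] at this
  exact (S.piece_props (hw 0 (by omega))).1 this

lemma cyl_pattern {d : ℕ} {w : ℕ → Set ℝ} (hw : ∀ k < d, w k ∈ S.PieceFamily)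
    {z z' : ℝ} (hz : z ∈ S.Cyl d w) (hz' : z' ∈ S.Cyl d w) {k : ℕ} (hk : k < d) :
    S.G^[k] z ∈ S.IU ↔ S.G^[k] z' ∈ S.IU := by
  have h1 := S.cyl_mem hz hk
  have h2 := S.cyl_mem hz' hk
  rcases (S.piece_props (hw k hk)).2 with hsub | hdis
  · exact ⟨fun _ => hsub h2, fun _ => hsub h1⟩
  · constructor
    · intro h
      exact absurd (Set.mem_inter h1 h) (by rw [hdis]; exact Set.notMem_empty _)
    · intro h
      exact absurd (Set.mem_inter h2 h) (by rw [hdis]; exact Set.notMem_empty _)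

end CantorData
namespace CantorData
variable (S : CantorData)

set_option maxHeartbeats 1000000 in
lemma main_bound {α τ' τ'' : ℝ} (hα0 : 0 < α) (h1 : 0 < τ'') (h2 : τ'' < τ') {n : ℕ}
    (hn1 : 1 ≤ n) (hnτ : τ' < n) (hnlam : τ' / n ≤ S.lam) (hj2 : 2 ≤ S.jn τ' n) :
    S.mes (S.GammaPlus α τ' τ'' n \ S.GammaMinus α τ' τ'' n) ≤
      ENNReal.ofReal ((32 * τ' / (S.lam ^ 2 * (τ' - max τ'' (S.lam * τ')))) *
        (max S.lam (1 - S.lam)) ^ (S.jn τ' n)) * S.mes (S.UnPair1 α τ' τ'' n) := by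
  have hτ' : 0 < τ' := lt_trans h1 h2
  have hnR : (0:ℝ) < n := by exact_mod_cast hn1
  have hlam0 := S.lam_pos
  have hlam1 := S.lam_lt_one
  have hθ0 := S.theta_pos
  have hθ1 := S.theta_lt_one
  set θ := max S.lam (1 - S.lam) with hθdef
  set β := max τ'' (S.lam * τ') with hβdef
  have hβτ : β < τ' := max_lt h2 (by nlinarith)
  have hβ0 : 0 < β := lt_of_lt_of_le h1 (le_max_left _ _)
  obtain ⟨m, hm⟩ : ∃ m, S.jn τ' n = m + 2 := ⟨S.jn τ' n - 2, by omega⟩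
  have hjle : S.lam ^ (S.jn τ' n) ≤ τ' / n := S.jn_le hτ' hn1
  have hjlt : τ' / n < S.lam ^ (S.jn τ' n - 1) := S.jn_lt hτ' hnτ
  rw [hm] at hjle hjlt
  rw [show m + 2 - 1 = m + 1 by omega] at hjlt
  have hup : (n:ℝ) * S.lam ^ (m + 2) ≤ τ' := by
    have := (le_div_iff₀ hnR).mp hjle
    linarith
  set d := 2 * S.jn τ' n with hddef
  have hdm : d = 2 * m + 4 := by omega
  have hd1 : 1 ≤ d := by omega
  set Mb : ℝ := 2 * S.lam ^ m * θ ^ (m + 4) with hMbdef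
  have hMb0 : 0 < Mb := by positivity
  have hβn : β / n < τ' / n := by gcongr
  have hβn0 : 0 < β / n := div_pos hβ0 hnR
  have hU1 := S.UnPair1_eq (τ' := τ') (τ'' := τ'') hα0 h1 h2 hn1 hnlam
  rw [← hβdef] at hU1
  set W1 : Set ℝ := {z ∈ Set.Icc (0:ℝ) 1 |
      max (β / n - 2 * Mb) 0 ≤ S.F (S.psi z) ∧ S.F (S.psi z) ≤ β / n + 2 * Mb} with hW1def
  set W2 : Set ℝ := {z ∈ Set.Icc (0:ℝ) 1 |
      max (τ' / n - 2 * Mb) 0 ≤ S.F (S.psi z) ∧ S.F (S.psi z) ≤ τ' / n + 2 * Mb} with hW2def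
  have hbcyl : ∀ C : Set ℝ, S.IsCylinder d C → (C ∩ S.UnPair1 α τ' τ'' n).Nonempty →
      ¬ C ⊆ S.UnPair1 α τ' τ'' n → C ⊆ W1 ∪ W2 := by
    rintro C ⟨w, hw, rfl⟩ ⟨x, hxC, hxU⟩ hnsub
    obtain ⟨x', hx'C, hx'U⟩ := Set.not_subset.mp hnsub
    have hCicc := S.cyl_sub_Icc hd1 hw
    rw [hU1] at hxU
    obtain ⟨hxIcc, hxIU, hxlo, hxhi⟩ := hxU
    have hψx : S.psi x < (2:ℝ)⁻¹ ^ (m + 1) := by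
      by_contra hh
      push_neg at hh
      have hF1 : S.lam ^ (m + 1) ≤ S.F ((2:ℝ)⁻¹ ^ (m + 1)) := S.F_lb (m + 1)
      have hF2 : S.F ((2:ℝ)⁻¹ ^ (m + 1)) ≤ S.F (S.psi x) := S.F_mono hh
      linarith
    have hψC : ∀ z ∈ S.Cyl d w, S.psi z < (2:ℝ)⁻¹ ^ m := by
      intro z hz
      have hclose := S.psi_close (fun i hi => S.cyl_pattern hw hz hxC hi)
      have h2d : ((2:ℝ)⁻¹) ^ d ≤ (2:ℝ)⁻¹ ^ (m + 1) :=
        pow_le_pow_of_le_one (by norm_num) (by norm_num) (by omega)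
      have hps : (2:ℝ)⁻¹ ^ (m + 1) + (2:ℝ)⁻¹ ^ (m + 1) = (2:ℝ)⁻¹ ^ m := by
        rw [pow_succ]; ring
      rw [abs_le] at hclose
      linarith [hclose.1, hclose.2]
    have hosc : ∀ z ∈ S.Cyl d w, ∀ z' ∈ S.Cyl d w,
        |S.F (S.psi z) - S.F (S.psi z')| ≤ Mb := by
      have key : ∀ y y', y ∈ S.Cyl d w → y' ∈ S.Cyl d w → S.psi y' ≤ S.psi y →
          S.F (S.psi y) - S.F (S.psi y') ≤ Mb := by
        intro y y' hy hy' hle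
        have hclose := S.psi_close (fun i hi => S.cyl_pattern hw hy hy' hi)
        rw [abs_le] at hclose
        have hFd := S.F_diff_le' hle (show m ≤ d by omega) (by linarith [hclose.1])
          (fun _ => hψC y hy)
        rw [show d - m = m + 4 by omega] at hFd
        calc S.F (S.psi y) - S.F (S.psi y') ≤ 2 * S.lam ^ m * θ ^ (m + 4) := hFd
        _ = Mb := by rw [hMbdef]
      intro z hz z' hz'
      rcases le_total (S.psi z') (S.psi z) with h | h
      · rw [abs_of_nonneg (by linarith [S.F_mono h] : (0:ℝ) ≤ _)]
        exact key z z' hz hz' h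
      · rw [abs_of_nonpos (by linarith [S.F_mono h] : _ ≤ (0:ℝ))]
        have := key z' z hz' hz h
        linarith
    have hx'Icc : x' ∈ Set.Icc (0:ℝ) 1 := hCicc hx'C
    have hx'IU : x' ∈ S.IU := by
      have hpat := S.cyl_pattern hw hxC hx'C (show 0 < d by omega)
      simp only [Function.iterate_zero, id_eq] at hpat
      exact hpat.mp hxIU
    have hx'win : S.F (S.psi x') < β / n ∨ τ' / n ≤ S.F (S.psi x') := by
      by_contra hh
      push_neg at hh
      apply hx'U
      rw [hU1]
      exact ⟨hx'Icc, hx'IU, hh.1, hh.2⟩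
    intro z hzC
    have hzIcc := hCicc hzC
    have hoscx := hosc z hzC x hxC
    rw [abs_le] at hoscx
    rcases hx'win with hcase | hcase
    · left
      have hoscx' := hosc x hxC x' hx'C
      rw [abs_le] at hoscx'
      refine ⟨hzIcc, ?_, ?_⟩
      · exact max_le (by linarith [hoscx.1]) (S.F_nonneg _)
      · linarith [hoscx.2, hoscx'.1]
    · right
      have hoscx' := hosc x' hx'C x hxC
      rw [abs_le] at hoscx'
      refine ⟨hzIcc, ?_, ?_⟩
      · exact max_le (by linarith [hoscx.1, hoscx'.2]) (S.F_nonneg _)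
      · linarith [hoscx.2]
  have hGsub : S.GammaPlus α τ' τ'' n \ S.GammaMinus α τ' τ'' n ⊆ W1 ∪ W2 := by
    rintro z ⟨hzp, hzm⟩
    obtain ⟨C, hC, hzC⟩ := hzp
    obtain ⟨hCcyl, hCmeet⟩ := hC
    by_cases hsub : C ⊆ S.UnPair1 α τ' τ'' n
    · exact absurd ⟨C, ⟨hCcyl, hsub⟩, hzC⟩ hzm
    · exact hbcyl C hCcyl hCmeet hsub hzC
  have hW1vol : volume W1 ≤ ENNReal.ofReal (4 * Mb) := by
    rw [hW1def]
    refine le_trans (S.measFpsi_window_upper (le_max_right _ _)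
      (max_le (by nlinarith [hnlam]) zero_le_one)
      (le_trans (max_le (by linarith) (by positivity)) (le_refl _))) ?_
    apply ENNReal.ofReal_le_ofReal
    have := le_max_left (β / n - 2 * Mb) 0
    linarith
  have hW2vol : volume W2 ≤ ENNReal.ofReal (4 * Mb) := by
    rw [hW2def]
    refine le_trans (S.measFpsi_window_upper (le_max_right _ _)
      (max_le (by nlinarith [hnlam]) zero_le_one)
      (le_trans (max_le (by linarith) (by positivity)) (le_refl _))) ?_
    apply ENNReal.ofReal_le_ofReal
    have := le_max_left (τ' / n - 2 * Mb) 0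
    linarith
  have hLHS : S.mes (S.GammaPlus α τ' τ'' n \ S.GammaMinus α τ' τ'' n) ≤
      ENNReal.ofReal (8 * Mb) := by
    rw [S.mes_apply]
    calc volume ((S.GammaPlus α τ' τ'' n \ S.GammaMinus α τ' τ'' n) ∩ Set.Icc 0 1)
        ≤ volume (W1 ∪ W2) :=
          measure_mono (le_trans Set.inter_subset_left hGsub)
    _ ≤ volume W1 + volume W2 := measure_union_le _ _
    _ ≤ ENNReal.ofReal (4 * Mb) + ENNReal.ofReal (4 * Mb) := add_le_add hW1vol hW2vol
    _ = ENNReal.ofReal (8 * Mb) := by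
        rw [← ENNReal.ofReal_add (by positivity) (by positivity)]
        congr 1
        ring
  have hlow : ENNReal.ofReal ((τ' - β) / (2 * n)) ≤ S.mes (S.UnPair1 α τ' τ'' n) := by
    set e' : ℝ := (β / n + τ' / n) / 2 with he'def
    have he'lt : e' < τ' / n := by rw [he'def]; linarith
    have he'ge : β / n ≤ e' := by rw [he'def]; linarith
    have hYsub : {z ∈ Set.Icc (0:ℝ) 1 | β / n ≤ S.F (S.psi z) ∧ S.F (S.psi z) ≤ e'} ⊆
        S.UnPair1 α τ' τ'' n := by
      intro z hz
      obtain ⟨hzIcc, hzlo, hzhi⟩ := hz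
      rw [hU1]
      have hzIU : z ∈ S.IU := by
        by_contra hh
        have := S.F_off_IU hh
        linarith [hnlam]
      exact ⟨hzIcc, hzIU, hzlo, by linarith⟩
    have hWL := S.measFpsi_window_lower (le_of_lt hβn0) he'ge (by linarith [hnlam])
    have heq : e' - β / n = (τ' - β) / (2 * n) := by
      rw [he'def]
      field_simp
      ring
    rw [heq] at hWL
    refine le_trans hWL ?_
    rw [S.mes_apply]
    refine le_trans (measure_mono hYsub) (measure_mono ?_)
    intro z hz
    rw [hU1] at hz
    exact ⟨by rw [hU1]; exact hz, hz.1⟩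
  -- the real inequality
  have hreal : 8 * Mb ≤ ((32 * τ' / (S.lam ^ 2 * (τ' - β))) * θ ^ (S.jn τ' n)) *
      ((τ' - β) / (2 * n)) := by
    rw [hm]
    have hne1 : S.lam ≠ 0 := ne_of_gt hlam0
    have hne2 : τ' - β ≠ 0 := ne_of_gt (by linarith)
    have hne3 : (n:ℝ) ≠ 0 := ne_of_gt hnR
    have hRHS : ((32 * τ' / (S.lam ^ 2 * (τ' - β))) * θ ^ (m + 2)) * ((τ' - β) / (2 * n)) =
        16 * τ' * θ ^ (m + 2) / (S.lam ^ 2 * n) := by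
      field_simp
      ring
    rw [hRHS]
    rw [le_div_iff₀ (by positivity : (0:ℝ) < S.lam ^ 2 * n)]
    have hsplit : 8 * Mb * (S.lam ^ 2 * n) =
        16 * θ ^ (m + 2) * (θ ^ 2 * (S.lam ^ m * S.lam ^ 2 * n)) := by
      rw [hMbdef, show θ ^ (m + 4) = θ ^ (m + 2) * θ ^ 2 by rw [← pow_add]]
      ring
    rw [hsplit]
    have ht1 : S.lam ^ m * S.lam ^ 2 * n ≤ τ' := by
      rw [← pow_add]
      linarith [hup]
    have hθsq : θ ^ 2 ≤ 1 := pow_le_one₀ hθ0.le hθ1.le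
    have ht2 : θ ^ 2 * (S.lam ^ m * S.lam ^ 2 * n) ≤ τ' := by
      calc θ ^ 2 * (S.lam ^ m * S.lam ^ 2 * n) ≤ 1 * (S.lam ^ m * S.lam ^ 2 * n) := by
            apply mul_le_mul_of_nonneg_right hθsq
            positivity
      _ = S.lam ^ m * S.lam ^ 2 * n := one_mul _
      _ ≤ τ' := ht1
    calc 16 * θ ^ (m + 2) * (θ ^ 2 * (S.lam ^ m * S.lam ^ 2 * n)) ≤
        16 * θ ^ (m + 2) * τ' := by
          apply mul_le_mul_of_nonneg_left ht2
          positivity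
    _ = 16 * τ' * θ ^ (m + 2) := by ring
  calc S.mes (S.GammaPlus α τ' τ'' n \ S.GammaMinus α τ' τ'' n)
      ≤ ENNReal.ofReal (8 * Mb) := hLHS
  _ ≤ ENNReal.ofReal (((32 * τ' / (S.lam ^ 2 * (τ' - β))) * θ ^ (S.jn τ' n)) *
        ((τ' - β) / (2 * n))) := ENNReal.ofReal_le_ofReal hreal
  _ = ENNReal.ofReal ((32 * τ' / (S.lam ^ 2 * (τ' - β))) * θ ^ (S.jn τ' n)) *
        ENNReal.ofReal ((τ' - β) / (2 * n)) := by
      rw [ENNReal.ofReal_mul (mul_nonneg (div_nonneg (by linarith)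
        (mul_nonneg (pow_nonneg hlam0.le 2) (by linarith))) (pow_nonneg hθ0.le _))]
  _ ≤ _ := mul_le_mul_right hlow _

end CantorData
/-- paper's Lemma 4.5: there is a sequence `ρ_n → 0`, `ρ_n ≥ 0`, with
`𝔪(Γ_n^+ ∖ Γ_n^-) ≤ ρ_n 𝔪(U_n(τ',τ'')^{(1)})` for all large `n`. -/
theorem cylinder_approximation (S : CantorData) (α : ℝ)
    (hα : α ∈ Set.Ioo (0:ℝ) 2) (τ' τ'' : ℝ) (h1 : 0 < τ'') (h2 : τ'' < τ') :
    ∃ ρ : ℕ → ℝ, (∀ n, 0 ≤ ρ n) ∧ Filter.Tendsto ρ Filter.atTop (𝓝 0) ∧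
      ∃ N : ℕ, ∀ n : ℕ, N ≤ n →
        S.mes (S.GammaPlus α τ' τ'' n \ S.GammaMinus α τ' τ'' n) ≤
          ENNReal.ofReal (ρ n) * S.mes (S.UnPair1 α τ' τ'' n) := by
  obtain ⟨hα0, -⟩ := hα
  have hτ' : 0 < τ' := lt_trans h1 h2
  have hlam0 := S.lam_pos
  have hlam1 := S.lam_lt_one
  have hθ0 := S.theta_pos
  have hθ1 := S.theta_lt_one
  have hβτ : max τ'' (S.lam * τ') < τ' := max_lt h2 (by nlinarith)
  have hC00 : 0 ≤ 32 * τ' / (S.lam ^ 2 * (τ' - max τ'' (S.lam * τ'))) :=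
    div_nonneg (by linarith) (mul_nonneg (pow_nonneg hlam0.le 2) (by linarith))
  refine ⟨fun n => (32 * τ' / (S.lam ^ 2 * (τ' - max τ'' (S.lam * τ')))) *
    (max S.lam (1 - S.lam)) ^ (S.jn τ' n), ?_, ?_, ?_⟩
  · intro n
    exact mul_nonneg hC00 (pow_nonneg hθ0.le _)
  · have h1' : Filter.Tendsto (fun k : ℕ => (max S.lam (1 - S.lam)) ^ k)
        Filter.atTop (𝓝 0) := tendsto_pow_atTop_nhds_zero_of_lt_one hθ0.le hθ1
    have h2' := h1'.comp (S.jn_tendsto hτ')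
    have h3' := h2'.const_mul (32 * τ' / (S.lam ^ 2 * (τ' - max τ'' (S.lam * τ'))))
    rw [mul_zero] at h3'
    exact h3'
  · have ev1 : ∀ᶠ n : ℕ in Filter.atTop, 1 ≤ n := Filter.eventually_ge_atTop 1
    have ev2 : ∀ᶠ n : ℕ in Filter.atTop, τ' < (n:ℝ) := by
      rw [Filter.eventually_atTop]
      refine ⟨⌈τ'⌉₊ + 1, fun n hn => ?_⟩
      have h4 : (⌈τ'⌉₊ : ℝ) < n := by exact_mod_cast Nat.lt_of_lt_of_le (Nat.lt_succ_self _) hn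
      exact lt_of_le_of_lt (Nat.le_ceil τ') h4
    have ev3 : ∀ᶠ n : ℕ in Filter.atTop, τ' / (n:ℝ) ≤ S.lam := by
      rw [Filter.eventually_atTop]
      refine ⟨⌈τ' / S.lam⌉₊ + 1, fun n hn => ?_⟩
      have hn1 : 1 ≤ n := by omega
      have hnR : (0:ℝ) < n := by exact_mod_cast hn1
      rw [div_le_iff₀ hnR]
      have h4 : τ' / S.lam ≤ (n:ℝ) := by
        refine le_trans (Nat.le_ceil _) ?_
        exact_mod_cast (by omega : ⌈τ' / S.lam⌉₊ ≤ n)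
      calc τ' = (τ' / S.lam) * S.lam := by field_simp
      _ ≤ (n:ℝ) * S.lam := mul_le_mul_of_nonneg_right h4 hlam0.le
      _ = S.lam * (n:ℝ) := mul_comm _ _
    have ev4 : ∀ᶠ n : ℕ in Filter.atTop, 2 ≤ S.jn τ' n :=
      (S.jn_tendsto hτ').eventually_ge_atTop 2
    obtain ⟨N, hN⟩ := Filter.eventually_atTop.mp (((ev1.and ev2).and ev3).and ev4)
    refine ⟨N, fun n hn => ?_⟩
    obtain ⟨⟨⟨hn1, hn2⟩, hn3⟩, hn4⟩ := hN n hn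
    exact S.main_bound hα0 h1 h2 hn1 hn2 hn3 hn4
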